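/- arXiv:2409.00697 — 8 statements merged into one kernel-verified Lean document; each statement's English description precedes it below -/
import Mathlib

section
/- Let G be a connected graph on n vertices and let k ∈ {1,…,n}. Then G admits a packing k-coloring if and only if the graph G(k) contains an independent set of cardinality n. -/
open SimpleGraph

/-- A packing `k`-coloring of `G`: colors in `{1,…,k}` and vertices of equal color `i`
are at distance greater than `i` (vertices in different components are unconstrained). -/
def IsPackingColoring {V : Type*} (G : SimpleGraph V) (k : ℕ) (c : V → ℕ) : Prop :=
  (∀ v, 1 ≤ c v ∧ c v ≤ k) ∧
  ∀ u v, u ≠ v → c u = c v → G.Reachable u v → c u < G.dist u v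

/-- A greedy packing `k`-coloring: a packing `k`-coloring that uses color `k` and in which
every vertex of color `i ≥ 2` has, for every `j < i`, a vertex of color `j`
at distance at most `j`. -/
def IsGreedyPackingColoring {V : Type*} (G : SimpleGraph V) (k : ℕ) (c : V → ℕ) : Prop :=
  IsPackingColoring G k c ∧ (∃ v, c v = k) ∧
  ∀ v, ∀ j, 1 ≤ j → j < c v → ∃ u, c u = j ∧ G.Reachable u v ∧ G.dist u v ≤ j

/-- The Grundy packing chromatic number: the largest `k` admitting a greedy packing
`k`-coloring. -/
noncomputable def grundyPackingChromaticNumber {V : Type*} (G : SimpleGraph V) : ℕ :=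
  sSup {k | ∃ c : V → ℕ, IsGreedyPackingColoring G k c}

/-- The packing chromatic number: the smallest `k` admitting a packing `k`-coloring. -/
noncomputable def packingChromaticNumber {V : Type*} (G : SimpleGraph V) : ℕ :=
  sInf {k | ∃ c : V → ℕ, IsPackingColoring G k c}

/-- `s` is an independent set of `G`. -/
def IsIndepFinset {V : Type*} (G : SimpleGraph V) (s : Finset V) : Prop :=
  ∀ u ∈ s, ∀ v ∈ s, ¬ G.Adj u v

/-- `s` is a maximal independent set of `G`. -/
def IsMaxIndepFinset {V : Type*} (G : SimpleGraph V) (s : Finset V) : Prop :=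
  IsIndepFinset G s ∧ ∀ t : Finset V, IsIndepFinset G t → s ⊆ t → s = t

/-- The independent domination number `i(G)`:
the minimum cardinality of a maximal independent set. -/
noncomputable def indepDomNum {V : Type*} (G : SimpleGraph V) [Fintype V] : ℕ :=
  sInf {n | ∃ s : Finset V, IsMaxIndepFinset G s ∧ s.card = n}

/-- The graph `G^ℓ`: same vertices, `u ∼ v` iff `u ≠ v` and `d_G(u,v) ≤ ℓ`. -/
def distPow {V : Type*} (G : SimpleGraph V) (ℓ : ℕ) : SimpleGraph V where
  Adj u v := u ≠ v ∧ G.dist u v ≤ ℓ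
  symm := by
    constructor
    rintro u v ⟨h1, h2⟩
    exact ⟨h1.symm, by rwa [SimpleGraph.dist_comm]⟩
  loopless := by constructor; rintro v ⟨h, _⟩; exact h rfl

/-- The graph `G(k)`: vertex set is `k` disjoint copies of `V(G)`, the copy `i : Fin k`
playing the role of `G^(i+1)`; the `k` copies of each vertex form a clique, and within the
`i`-th copy two distinct vertices are adjacent iff their distance in `G` is at most `i+1`. -/
def levelGraph {V : Type*} (G : SimpleGraph V) (k : ℕ) : SimpleGraph (V × Fin k) where
  Adj p q := (p.1 = q.1 ∧ p.2 ≠ q.2) ∨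
    (p.1 ≠ q.1 ∧ p.2 = q.2 ∧ G.dist p.1 q.1 ≤ (p.2 : ℕ) + 1)
  symm := by
    constructor
    rintro p q (⟨h1, h2⟩ | ⟨h1, h2, h3⟩)
    · exact Or.inl ⟨h1.symm, h2.symm⟩
    · refine Or.inr ⟨h1.symm, h2.symm, ?_⟩
      rw [SimpleGraph.dist_comm, ← h2]
      exact h3
  loopless := by constructor; rintro p (⟨_, h⟩ | ⟨h, _, _⟩) <;> exact h rfl

/-- `A` is a maximal independent set of the subgraph of `H` induced on `S`. -/
def IsMaxIndepSetOn {V : Type*} (H : SimpleGraph V) (S : Set V) (A : Set V) : Prop :=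
  A ⊆ S ∧ (∀ u ∈ A, ∀ v ∈ A, ¬ H.Adj u v) ∧
  ∀ B : Set V, B ⊆ S → (∀ u ∈ B, ∀ v ∈ B, ¬ H.Adj u v) → A ⊆ B → A = B

/-- The eccentricity of a vertex. -/
noncomputable def eccent {V : Type*} (G : SimpleGraph V) [Fintype V] (v : V) : ℕ :=
  Finset.univ.sup (fun u => G.dist v u)

/-- The radius of a graph. -/
noncomputable def graphRadius {V : Type*} (G : SimpleGraph V) [Fintype V] : ℕ :=
  sInf (Set.range (eccent G))

/-- The diameter of a graph. -/
noncomputable def graphDiam {V : Type*} (G : SimpleGraph V) [Fintype V] : ℕ :=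
  Finset.univ.sup (eccent G)

/-- The diametrical graph `D(G)`: `x ∼ y` iff `d_G(x,y) = diam(G)`. -/
noncomputable def diamGraph {V : Type*} (G : SimpleGraph V) [Fintype V] : SimpleGraph V where
  Adj u v := u ≠ v ∧ G.dist u v = graphDiam G
  symm := by
    constructor
    rintro u v ⟨h1, h2⟩
    exact ⟨h1.symm, by rwa [SimpleGraph.dist_comm]⟩
  loopless := by constructor; rintro v ⟨h, _⟩; exact h rfl

/-- `Q` is a clique of the subgraph of `H` induced on `S`. -/
def IsCliqueFinsetOn {V : Type*} (H : SimpleGraph V) (S : Set V) (Q : Finset V) : Prop :=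
  ↑Q ⊆ S ∧ ∀ u ∈ Q, ∀ v ∈ Q, u ≠ v → H.Adj u v

/-- `Q` is a maximal clique of the subgraph of `H` induced on `S`. -/
def IsMaxCliqueFinsetOn {V : Type*} (H : SimpleGraph V) (S : Set V) (Q : Finset V) : Prop :=
  IsCliqueFinsetOn H S Q ∧ ∀ R : Finset V, IsCliqueFinsetOn H S R → Q ⊆ R → Q = R

/-- The join `G ∨ H` of two graphs. -/
def joinGraph {V W : Type*} (G : SimpleGraph V) (H : SimpleGraph W) :
    SimpleGraph (V ⊕ W) where
  Adj p q := match p, q with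
    | .inl u, .inl v => G.Adj u v
    | .inr u, .inr v => H.Adj u v
    | .inl _, .inr _ => True
    | .inr _, .inl _ => True
  symm := by
    constructor
    rintro (u | u) (v | v) h
    · exact G.adj_symm h
    · trivial
    · trivial
    · exact H.adj_symm h
  loopless := by
    constructor
    rintro (u | u) h
    · exact G.irrefl h
    · exact H.irrefl h

/-- `K_{n,n}` minus a perfect matching: parts `{u_i}` and `{v_i}`, with `u_i ∼ v_j` iff
`i ≠ j`. -/
def completeBipartiteMinusMatching (n : ℕ) : SimpleGraph (Fin n ⊕ Fin n) where
  Adj p q := match p, q with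
    | .inl i, .inr j => i ≠ j
    | .inr i, .inl j => i ≠ j
    | _, _ => False
  symm := by constructor; rintro (i | i) (j | j) h <;> first | exact h.symm | exact h
  loopless := by constructor; rintro (i | i) h <;> exact h


/-- For a connected graph `G` on `n` vertices and `k ∈ {1,…,n}`,
`G` admits a packing `k`-coloring iff `G(k)` contains an independent set of cardinality `n`. -/
theorem packingColoring_iff_indepSet_levelGraph {V : Type*} [Fintype V] (G : SimpleGraph V)
    (hG : G.Connected) (k : ℕ) (hk1 : 1 ≤ k) (hk2 : k ≤ Fintype.card V) :
    (∃ c : V → ℕ, IsPackingColoring G k c) ↔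
    ∃ A : Finset (V × Fin k), IsIndepFinset (levelGraph G k) A ∧
      A.card = Fintype.card V := by
  classical
  constructor
  · rintro ⟨c, hc1, hc2⟩
    have hf : ∀ v, c v - 1 < k := fun v => by have := hc1 v; omega
    refine ⟨Finset.univ.image (fun v => (v, (⟨c v - 1, hf v⟩ : Fin k))), ?_, ?_⟩
    · intro p hp q hq hadj
      simp only [Finset.mem_image, Finset.mem_univ, true_and] at hp hq
      obtain ⟨u, rfl⟩ := hp
      obtain ⟨v, rfl⟩ := hq
      rcases hadj with ⟨h1, h2⟩ | ⟨h1, h2, h3⟩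
      · simp only at h1
        subst h1
        exact h2 rfl
      · simp only at h1 h2 h3
        have hval := congrArg Fin.val h2
        simp only at hval
        have h1u := hc1 u; have h1v := hc1 v
        have hcv : c u = c v := by omega
        have := hc2 u v h1 hcv (hG.preconnected u v)
        omega
    · rw [Finset.card_image_of_injective _ (fun a b h => congrArg Prod.fst h),
        Finset.card_univ]
  · rintro ⟨A, hA, hcard⟩
    have hinj : Set.InjOn Prod.fst (A : Set (V × Fin k)) := by
      intro p hp q hq h
      by_contra hne
      have h2 : p.2 ≠ q.2 := fun h2 => hne (Prod.ext h h2)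
      exact hA p hp q hq (Or.inl ⟨h, h2⟩)
    have himg : A.image Prod.fst = Finset.univ := by
      apply Finset.eq_univ_of_card
      rw [Finset.card_image_of_injOn hinj, hcard]
    have hex : ∀ v : V, ∃ i : Fin k, (v, i) ∈ A := by
      intro v
      have : v ∈ A.image Prod.fst := himg ▸ Finset.mem_univ v
      simp only [Finset.mem_image] at this
      obtain ⟨p, hp, h⟩ := this
      exact ⟨p.2, by rwa [← h, Prod.mk.eta]⟩
    choose g hg using hex
    refine ⟨fun v => (g v : ℕ) + 1, ⟨fun v => ⟨Nat.le_add_left 1 _, ?_⟩, ?_⟩⟩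
    · show (g v : ℕ) + 1 ≤ k
      have := (g v).isLt; omega
    · intro u v hne hcuv hr
      by_contra hlt
      push_neg at hlt
      have hcuv' : (g u : ℕ) + 1 = (g v : ℕ) + 1 := hcuv
      have hlt' : G.dist u v ≤ (g u : ℕ) + 1 := hlt
      have hgi : g u = g v := Fin.ext (by omega)
      exact hA (u, g u) (hg u) (v, g v) (hg v) (Or.inr ⟨hne, by rw [hgi], hlt'⟩)
end

section
/- Let G be a connected graph on n vertices. Then the Grundy packing chromatic number Γρ(G) equals the maximum k ∈ {1,…,n} for which there exists an independent set A of cardinality n in G(k) such that A ∩ V(G^k) ≠ ∅ and, for every i ∈ {1,…,k−1}, the set A ∩ V(G^i) is a maximal independent set of the subgraph of G^i induced on those vertices v^i for which no copy v^j with j < i belongs to A. -/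
open SimpleGraph

/-- `Γρ(G)` is the maximum `k ∈ {1,…,n}` for which `G(k)` has an independent
set `A` of cardinality `n` meeting the top level `G^k` such that for every `i ∈ {1,…,k-1}`
the trace of `A` on the `i`-th level is a maximal independent set of the subgraph of `G^i`
induced on vertices whose copies on earlier levels avoid `A`. -/
theorem grundyPackingChromaticNumber_eq_max_levelGraph {V : Type*} [Fintype V]
    (G : SimpleGraph V) (hG : G.Connected) :
    grundyPackingChromaticNumber G =
      sSup {k : ℕ | 1 ≤ k ∧ k ≤ Fintype.card V ∧
        ∃ A : Finset (V × Fin k), IsIndepFinset (levelGraph G k) A ∧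
          A.card = Fintype.card V ∧
          (∃ p : V × Fin k, p ∈ A ∧ (p.2 : ℕ) = k - 1) ∧
          ∀ i : Fin k, (i : ℕ) + 1 ≤ k - 1 →
            IsMaxIndepSetOn (distPow G ((i : ℕ) + 1))
              {v : V | ∀ j : Fin k, j < i → (v, j) ∉ A}
              {v : V | (v, i) ∈ A}} := by
  classical
  have hpre : ∀ u v : V, G.Reachable u v := fun u v => hG.preconnected u v
  unfold grundyPackingChromaticNumber
  congr 1
  ext k
  simp only [Set.mem_setOf_eq]
  constructor
  · -- forward: from a greedy packing k-coloring build the witness A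
    rintro ⟨c, ⟨hrange, hpack⟩, ⟨v₀, hv₀⟩, hgreedy⟩
    have hk1 : 1 ≤ k := hv₀ ▸ (hrange v₀).1
    have hcvk : ∀ v, c v - 1 < k := fun v => by
      have h1 := (hrange v).1; have h2 := (hrange v).2; omega
    refine ⟨hk1, ?_, Finset.univ.image (fun v => (v, (⟨c v - 1, hcvk v⟩ : Fin k))), ?_, ?_, ?_, ?_⟩
    · -- k ≤ |V|
      have hex : ∀ j : Fin k, ∃ u, c u = (j : ℕ) + 1 := by
        intro j
        rcases eq_or_lt_of_le (Nat.succ_le_of_lt j.isLt) with h | h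
        · exact ⟨v₀, by omega⟩
        · obtain ⟨u, hu, _, _⟩ := hgreedy v₀ ((j : ℕ) + 1) (by omega) (by omega)
          exact ⟨u, hu⟩
      choose g hg using hex
      have hginj : Function.Injective g := by
        intro a b hab
        have h1 := hg a
        rw [hab, hg b] at h1
        exact Fin.ext (by omega)
      simpa using Fintype.card_le_of_injective g hginj
    · -- independence
      intro p hp q hq hadj
      simp only [Finset.mem_image, Finset.mem_univ, true_and] at hp hq
      obtain ⟨u, rfl⟩ := hp
      obtain ⟨w, rfl⟩ := hq
      rcases hadj with ⟨h1, h2⟩ | ⟨h1, h2, h3⟩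
      · simp only at h1 h2
        subst h1
        exact h2 rfl
      · simp only at h1 h2 h3
        have h4 : c u - 1 = c w - 1 := congrArg Fin.val h2
        have h5 := (hrange u).1
        have h6 := (hrange w).1
        have h7 : c u = c w := by omega
        have := hpack u w h1 h7 (hpre u w)
        omega
    · -- cardinality
      rw [Finset.card_image_of_injective _ (fun a b h => congrArg Prod.fst h)]
      exact Finset.card_univ
    · -- top level met
      refine ⟨(v₀, ⟨c v₀ - 1, hcvk v₀⟩), ?_, ?_⟩
      · exact Finset.mem_image_of_mem _ (Finset.mem_univ v₀)
      · simp only [hv₀]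
    · -- maximality on each lower level
      intro i hi
      have hmemA : ∀ (v : V) (j : Fin k),
          (v, j) ∈ Finset.univ.image (fun v => (v, (⟨c v - 1, hcvk v⟩ : Fin k))) ↔
            c v = (j : ℕ) + 1 := by
        intro v j
        simp only [Finset.mem_image, Finset.mem_univ, true_and]
        constructor
        · rintro ⟨u, hu⟩
          rw [Prod.mk.injEq] at hu
          obtain ⟨h4, hu2⟩ := hu
          have h3 : c u - 1 = (j : ℕ) := congrArg Fin.val hu2
          have h1 := (hrange u).1
          rw [← h4]
          omega
        · intro h
          exact ⟨v, by
            rw [Prod.mk.injEq]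
            exact ⟨rfl, Fin.ext (show c v - 1 = (j : ℕ) by omega)⟩⟩
      have hS : ∀ v : V, (∀ j : Fin k, j < i → (v, j) ∉
          Finset.univ.image (fun v => (v, (⟨c v - 1, hcvk v⟩ : Fin k)))) ↔
          (i : ℕ) + 1 ≤ c v := by
        intro v
        constructor
        · intro h
          by_contra hc
          have h1 := (hrange v).1
          have hlt : (⟨c v - 1, hcvk v⟩ : Fin k) < i := by
            rw [Fin.lt_def]; simp only; omega
          exact h _ hlt ((hmemA v _).2 (by simp only; omega))
        · intro h j hj hmem
          have := (hmemA v j).1 hmem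
          rw [Fin.lt_def] at hj
          omega
      refine ⟨?_, ?_, ?_⟩
      · intro v hv
        have := (hmemA v i).1 hv
        exact (hS v).2 (by omega)
      · intro u hu v hv hadj
        have hcu := (hmemA u i).1 hu
        have hcv := (hmemA v i).1 hv
        obtain ⟨hne, hd⟩ := hadj
        have := hpack u v hne (hcu.trans hcv.symm) (hpre u v)
        omega
      · intro B hBS hBindep hAB
        refine Set.Subset.antisymm hAB ?_
        intro v hvB
        by_contra hvA
        have hvS : (i : ℕ) + 1 ≤ c v := (hS v).1 (hBS hvB)
        have hvne : c v ≠ (i : ℕ) + 1 := fun h => hvA ((hmemA v i).2 h)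
        obtain ⟨u, hu, _, hd⟩ := hgreedy v ((i : ℕ) + 1) (by omega) (by omega)
        have huA : u ∈ {v : V | (v, i) ∈
            Finset.univ.image (fun v => (v, (⟨c v - 1, hcvk v⟩ : Fin k)))} :=
          (hmemA u i).2 hu
        have hune : u ≠ v := fun h => by rw [h] at hu; omega
        exact hBindep u (hAB huA) v hvB ⟨hune, hd⟩
  · -- backward: from the witness A build a greedy packing k-coloring
    rintro ⟨hk1, hkn, A, hAindep, hAcard, ⟨p₀, hp₀A, hp₀⟩, hmax⟩
    have hinjOn : Set.InjOn Prod.fst (A : Set (V × Fin k)) := by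
      intro p hp q hq h
      by_contra hne
      exact hAindep p hp q hq (Or.inl ⟨h, fun h2 => hne (Prod.ext h h2)⟩)
    have himg : A.image Prod.fst = Finset.univ := by
      apply Finset.eq_univ_of_card
      rw [Finset.card_image_of_injOn hinjOn, hAcard]
    have hexist : ∀ v : V, ∃ i : Fin k, (v, i) ∈ A := by
      intro v
      have hv : v ∈ A.image Prod.fst := himg ▸ Finset.mem_univ v
      obtain ⟨p, hp, hpv⟩ := Finset.mem_image.1 hv
      exact ⟨p.2, by rwa [← hpv, Prod.mk.eta]⟩
    choose lev hlev using hexist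
    have huniq : ∀ (v : V) (i : Fin k), (v, i) ∈ A → i = lev v := by
      intro v i hi
      have h := hinjOn (Finset.mem_coe.2 hi) (Finset.mem_coe.2 (hlev v)) rfl
      exact congrArg Prod.snd h
    refine ⟨fun v => (lev v : ℕ) + 1, ⟨⟨?_, ?_⟩, ?_, ?_⟩⟩
    · intro v
      dsimp only
      exact ⟨by omega, (lev v).isLt⟩
    · intro u v hne hc _
      dsimp only at hc
      by_contra hd
      push_neg at hd
      have hlevuv : lev u = lev v := Fin.ext (by omega)
      refine hAindep (u, lev u) (hlev u) (v, lev v) (hlev v)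
        (Or.inr ⟨hne, hlevuv, ?_⟩)
      simp only
      omega
    · refine ⟨p₀.1, ?_⟩
      have h1 : p₀.2 = lev p₀.1 := huniq p₀.1 p₀.2 (by rwa [Prod.mk.eta])
      have h2 : (lev p₀.1 : ℕ) = k - 1 := by rw [← h1]; exact hp₀
      dsimp only
      omega
    · intro v j hj1 hjc
      dsimp only at hjc
      by_contra hno
      push_neg at hno
      have hjlev : j ≤ (lev v : ℕ) := by omega
      have hjk : j - 1 < k := by
        have := (lev v).isLt; omega
      set i : Fin k := ⟨j - 1, hjk⟩ with hi
      have hik : (i : ℕ) + 1 ≤ k - 1 := by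
        have := (lev v).isLt
        simp only [hi]
        omega
      obtain ⟨hsub, hindep, hmaxB⟩ := hmax i hik
      set B : Set V := {u : V | (u, i) ∈ A} ∪ {v} with hB
      have hSmem : ∀ u : V, (i : ℕ) ≤ (lev u : ℕ) →
          u ∈ {w : V | ∀ j' : Fin k, j' < i → (w, j') ∉ A} := by
        intro u hu j' hj' hmem
        have := huniq u j' hmem
        rw [Fin.lt_def] at hj'
        have : (j' : ℕ) = (lev u : ℕ) := by rw [this]
        omega
      have hBS : B ⊆ {w : V | ∀ j' : Fin k, j' < i → (w, j') ∉ A} := by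
        intro u hu
        rcases hu with hu | hu
        · have : i = lev u := huniq u i hu
          exact hSmem u (by omega)
        · rcases hu with rfl
          refine hSmem u ?_
          simp only [hi]
          omega
      have hcolor : ∀ u : V, (u, i) ∈ A → (lev u : ℕ) + 1 = j := by
        intro u hu
        have := huniq u i hu
        have h2 : (i : ℕ) = (lev u : ℕ) := by rw [this]
        simp only [hi] at h2
        omega
      have hBindep : ∀ u ∈ B, ∀ w ∈ B, ¬ (distPow G ((i : ℕ) + 1)).Adj u w := by
        have hij : (i : ℕ) + 1 = j := by simp only [hi]; omega
        intro u hu w hw hadj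
        obtain ⟨hne, hd⟩ := hadj
        rw [hij] at hd
        rcases hu with hu | hu <;> rcases hw with hw | hw
        · exact hindep u hu w hw ⟨hne, by rw [hij]; exact hd⟩
        · rcases hw with rfl
          have := hno u (hcolor u hu) (hpre u w)
          omega
        · rcases hu with rfl
          have := hno w (hcolor w hw) (hpre w u)
          rw [SimpleGraph.dist_comm] at this
          omega
        · rcases hu with rfl
          rcases hw with rfl
          exact hne rfl
      have hAB : {u : V | (u, i) ∈ A} ⊆ B := Set.subset_union_left
      have heq := hmaxB B hBS hBindep hAB
      have hvB : v ∈ B := Or.inr rfl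
      rw [← heq] at hvB
      have := hcolor v hvB
      omega
end

section
/- For every connected graph G on n vertices, Γρ(G) ≤ n − i(G) + 1. -/
open SimpleGraph

/-- For every connected graph `G` on `n` vertices,
`Γρ(G) ≤ n - i(G) + 1`. -/
theorem grundyPackingChromaticNumber_le {V : Type*} [Fintype V] (G : SimpleGraph V)
    (hG : G.Connected) :
    grundyPackingChromaticNumber G ≤ Fintype.card V - indepDomNum G + 1 := by
  classical
  apply csSup_le'
  rintro k ⟨c, ⟨⟨hbd, hpack⟩, ⟨v₀, hv₀⟩, hgreedy⟩⟩
  have hk1 : 1 ≤ k := hv₀ ▸ (hbd v₀).1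
  have hall : ∀ j, 1 ≤ j → j ≤ k → ∃ u, c u = j := by
    intro j hj1 hjk
    rcases eq_or_lt_of_le hjk with rfl | hlt
    · exact ⟨v₀, hv₀⟩
    · obtain ⟨u, hu, _, _⟩ := hgreedy v₀ j hj1 (hv₀ ▸ hlt)
      exact ⟨u, hu⟩
  set S : Finset V := Finset.univ.filter (fun v => c v = 1) with hS
  have hSmem : ∀ v, v ∈ S ↔ c v = 1 := by
    intro v; simp [hS]
  have hSmax : IsMaxIndepFinset G S := by
    constructor
    · intro u hu v hv hadj
      have hne : u ≠ v := G.ne_of_adj hadj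
      have := hpack u v hne (((hSmem u).1 hu).trans ((hSmem v).1 hv).symm) (hG u v)
      rw [(hSmem u).1 hu, SimpleGraph.dist_eq_one_iff_adj.2 hadj] at this
      omega
    · intro t ht hst
      apply Finset.Subset.antisymm hst
      intro v hv
      by_contra hvS
      have hcv : 2 ≤ c v := by
        have := (hbd v).1
        have : c v ≠ 1 := fun h => hvS ((hSmem v).2 h)
        omega
      obtain ⟨u, hu1, hreach, hdist⟩ := hgreedy v 1 le_rfl hcv
      have hne : u ≠ v := by intro h; rw [h] at hu1; omega
      have hpos := hreach.pos_dist_of_ne hne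
      have hadj : G.Adj u v := SimpleGraph.dist_eq_one_iff_adj.1 (by omega)
      exact ht u (hst ((hSmem u).2 hu1)) v hv hadj
  have hiS : indepDomNum G ≤ S.card := Nat.sInf_le ⟨S, hSmax, rfl⟩
  have hall' : ∀ j : ℕ, ∃ u : V, 2 ≤ j → j ≤ k → c u = j := by
    intro j
    by_cases h : 2 ≤ j ∧ j ≤ k
    · obtain ⟨u, hu⟩ := hall j (by omega) h.2
      exact ⟨u, fun _ _ => hu⟩
    · exact ⟨v₀, fun h1 h2 => absurd ⟨h1, h2⟩ h⟩
  choose f hf using hall'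
  set T : Finset V := (Finset.Icc 2 k).image f with hT
  have hTcard : T.card = k - 1 := by
    rw [hT, Finset.card_image_of_injOn, Nat.card_Icc]
    · omega
    intro a ha b hb hab
    simp only [Finset.coe_Icc, Set.mem_Icc] at ha hb
    rw [← hf a ha.1 ha.2, ← hf b hb.1 hb.2, hab]
  have hdisj : Disjoint S T := by
    rw [Finset.disjoint_left]
    intro v hvS hvT
    rw [hT, Finset.mem_image] at hvT
    obtain ⟨j, hj, rfl⟩ := hvT
    simp only [Finset.mem_Icc] at hj
    have := hf j hj.1 hj.2
    have := (hSmem _).1 hvS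
    omega
  have hcard : S.card + (k - 1) ≤ Fintype.card V := by
    rw [← hTcard, ← Finset.card_union_of_disjoint hdisj]
    exact Finset.card_le_univ _
  omega
end

section
/- A graph G on n vertices satisfies Γρ(G) = n if and only if G has a universal vertex, i.e., a vertex adjacent to all other vertices. -/
open SimpleGraph

lemma greedy_color_exists {V : Type*} {G : SimpleGraph V} {k : ℕ} {c : V → ℕ}
    (h : IsGreedyPackingColoring G k c) : ∀ i : Fin k, ∃ u, c u = (i : ℕ) + 1 := by
  obtain ⟨hp, ⟨w, hw⟩, hg⟩ := h
  intro i
  rcases eq_or_lt_of_le (Nat.succ_le_of_lt i.isLt) with heq | hlt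
  · exact ⟨w, by rw [hw]; omega⟩
  · obtain ⟨u, hu, _, _⟩ := hg w ((i : ℕ) + 1) (by omega) (by rw [hw]; exact hlt)
    exact ⟨u, hu⟩

lemma greedy_le_card {V : Type*} [Fintype V] {G : SimpleGraph V} {k : ℕ} {c : V → ℕ}
    (h : IsGreedyPackingColoring G k c) : k ≤ Fintype.card V := by
  choose f hf using greedy_color_exists h
  have hinj : Function.Injective f := fun i j hij => by
    have h1 := hf i
    rw [hij, hf j] at h1
    exact Fin.ext (by omega)
  simpa using Fintype.card_le_of_injective f hinj

/-- A graph `G` on `n` vertices satisfies `Γρ(G) = n` iff `G` has a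
universal vertex. -/
theorem grundyPackingChromaticNumber_eq_card_iff {V : Type*} [Fintype V] [Nonempty V]
    (G : SimpleGraph V) :
    grundyPackingChromaticNumber G = Fintype.card V ↔
    ∃ v : V, ∀ u : V, u ≠ v → G.Adj v u := by
  classical
  set n := Fintype.card V with hn
  have hnpos : 0 < n := Fintype.card_pos
  constructor
  · intro h
    -- the set is nonempty and bounded, so n is attained
    have hbdd : BddAbove {k | ∃ c : V → ℕ, IsGreedyPackingColoring G k c} :=
      ⟨n, fun k ⟨c, hc⟩ => greedy_le_card hc⟩
    have hne : {k | ∃ c : V → ℕ, IsGreedyPackingColoring G k c}.Nonempty := by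
      by_contra hcon
      rw [Set.not_nonempty_iff_eq_empty] at hcon
      rw [grundyPackingChromaticNumber, hcon, csSup_empty] at h
      rw [show (⊥ : ℕ) = 0 from rfl] at h
      omega
    have hmem : n ∈ {k | ∃ c : V → ℕ, IsGreedyPackingColoring G k c} := by
      rw [← h, grundyPackingChromaticNumber]
      exact Nat.sSup_mem hne hbdd
    obtain ⟨c, hc⟩ := hmem
    choose f hf using greedy_color_exists hc
    have hinj : Function.Injective f := fun i j hij => by
      have h1 := hf i
      rw [hij, hf j] at h1
      exact Fin.ext (by omega)
    have hbij : Function.Bijective f :=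
      (Fintype.bijective_iff_injective_and_card f).2 ⟨hinj, by simp [hn]⟩
    have hcinj : Function.Injective c := by
      intro x y hxy
      obtain ⟨i, rfl⟩ := hbij.2 x
      obtain ⟨j, rfl⟩ := hbij.2 y
      rw [hf i, hf j] at hxy
      exact congrArg f (Fin.ext (by omega))
    refine ⟨f ⟨0, hnpos⟩, fun u hu => ?_⟩
    have hcv : c (f ⟨0, hnpos⟩) = 1 := hf ⟨0, hnpos⟩
    have hcu : 1 < c u := by
      have h1 := (hc.1.1 u).1
      rcases Nat.lt_or_ge 1 (c u) with h2 | h2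
      · exact h2
      · exfalso
        exact hu (hcinj (by omega : c u = c (f ⟨0, hnpos⟩)))
    obtain ⟨u', hu'1, hu'r, hu'd⟩ := hc.2.2 u 1 le_rfl hcu
    have huv : u' = f ⟨0, hnpos⟩ := hcinj (by rw [hu'1, hcv])
    have hune : u' ≠ u := fun hcon => by rw [hcon] at hu'1; omega
    have hdpos : 0 < G.dist u' u := hu'r.pos_dist_of_ne hune
    have : G.dist u' u = 1 := le_antisymm hu'd hdpos
    rw [SimpleGraph.dist_eq_one_iff_adj] at this
    rwa [huv] at this
  · rintro ⟨v, hv⟩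
    -- build a greedy packing n-coloring
    obtain ⟨e0⟩ := Fintype.truncEquivFin V
    set e : V ≃ Fin n := e0.trans (Equiv.swap (e0 v) ⟨0, hnpos⟩) with he
    have hev : e v = ⟨0, hnpos⟩ := by simp [he]
    set c : V → ℕ := fun x => (e x : ℕ) + 1 with hcdef
    have hcinj : Function.Injective c := fun x y hxy =>
      e.injective (Fin.ext (by simpa [hcdef] using hxy))
    have hgreedy : IsGreedyPackingColoring G n c := by
      refine ⟨⟨fun x => ⟨by show 1 ≤ (e x : ℕ) + 1; omega,
          by show (e x : ℕ) + 1 ≤ n; have := (e x).isLt; omega⟩, ?_⟩, ?_, ?_⟩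
      · intro u w hne hcc _
        exact absurd (hcinj hcc) hne
      · refine ⟨e.symm ⟨n - 1, by omega⟩, ?_⟩
        show (e (e.symm ⟨n - 1, by omega⟩) : ℕ) + 1 = n
        rw [Equiv.apply_symm_apply]
        show n - 1 + 1 = n
        omega
      · intro x j hj1 hjx
        have hjn : j - 1 < n := by
          have := (e x).isLt
          simp only [hcdef] at hjx
          omega
        set u := e.symm ⟨j - 1, hjn⟩ with hu
        have hcu : c u = j := by
          show (e u : ℕ) + 1 = j
          rw [hu, Equiv.apply_symm_apply]
          show j - 1 + 1 = j
          omega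
        refine ⟨u, hcu, ?_⟩
        have hxnev : x ≠ v := by
          intro hcon
          rw [hcon] at hjx
          simp [hcdef, hev] at hjx
          omega
        by_cases huv : u = v
        · have hadj : G.Adj u x := huv ▸ hv x hxnev
          refine ⟨hadj.reachable, ?_⟩
          rw [SimpleGraph.dist_eq_one_iff_adj.2 hadj]
          exact hj1
        · have hj2 : 2 ≤ j := by
            rcases Nat.lt_or_ge j 2 with h2 | h2
            · exfalso
              apply huv
              apply e.injective
              rw [hev]
              have : j = 1 := by omega
              simp [hu, this]
            · exact h2
          have hadj1 : G.Adj u v := (hv u huv).symm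
          have hadj2 : G.Adj v x := hv x hxnev
          refine ⟨⟨SimpleGraph.Walk.cons hadj1 hadj2.toWalk⟩, ?_⟩
          have hle := SimpleGraph.dist_le (SimpleGraph.Walk.cons hadj1 hadj2.toWalk)
          simp [SimpleGraph.Adj.toWalk] at hle
          omega
    apply le_antisymm
    · exact csSup_le ⟨n, c, hgreedy⟩ (fun k ⟨c', hc'⟩ => greedy_le_card hc')
    · exact le_csSup ⟨n, fun k ⟨c', hc'⟩ => greedy_le_card hc'⟩ ⟨c, hgreedy⟩
end

section
/- A disconnected graph G on n vertices satisfies Γρ(G) = n − 1 if and only if G is the disjoint union of K_1 and a graph G' that has a universal vertex (a vertex adjacent to all other vertices of G'). -/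
open SimpleGraph

section Aux

variable {V : Type*}

/-- Anything reachable from an isolated vertex equals it. -/
lemma aux_reach_isolated {G : SimpleGraph V} {v₀ : V} (h : ∀ u, ¬ G.Adj v₀ u) {u : V}
    (hr : G.Reachable u v₀) : u = v₀ := by
  obtain ⟨p⟩ := hr.symm
  cases p with
  | nil => rfl
  | cons ha _ => exact absurd ha (h _)

/-- In a greedy packing coloring, every vertex of color `≥ 2` is adjacent to a vertex of
color `1`. -/
lemma aux_adj_one {G : SimpleGraph V} {k : ℕ} {c : V → ℕ}
    (hg : IsGreedyPackingColoring G k c) {v : V} (hv : 2 ≤ c v) :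
    ∃ p, c p = 1 ∧ G.Adj p v := by
  obtain ⟨u, hu1, hur, hud⟩ := hg.2.2 v 1 le_rfl (by omega)
  have hne : u ≠ v := by intro h; rw [h] at hu1; omega
  have h0 : G.dist u v ≠ 0 := fun h => hne (hur.dist_eq_zero_iff.mp h)
  have h1 : G.dist u v = 1 := by omega
  exact ⟨u, hu1, SimpleGraph.dist_eq_one_iff_adj.mp h1⟩

/-- All colors `1, …, k` are used by a greedy packing `k`-coloring, via a choice function. -/
lemma aux_exists_rep {G : SimpleGraph V} {k : ℕ} {c : V → ℕ}
    (hg : IsGreedyPackingColoring G k c) :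
    ∃ (z : V) (g : ℕ → V), c z = k ∧ ∀ j, 1 ≤ j → j ≤ k →
      c (g j) = j ∧ G.Reachable (g j) z := by
  classical
  obtain ⟨z, hz⟩ := hg.2.1
  refine ⟨z, fun j => if hj : 1 ≤ j ∧ j < k then
    Classical.choose (hg.2.2 z j hj.1 (by rw [hz]; exact hj.2)) else z, hz, ?_⟩
  intro j hj1 hjk
  beta_reduce
  by_cases hlt : j < k
  · have hspec := Classical.choose_spec (hg.2.2 z j hj1 (by rw [hz]; exact hlt))
    rw [dif_pos ⟨hj1, hlt⟩]
    exact ⟨hspec.1, hspec.2.1⟩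
  · have hjk' : j = k := by omega
    rw [dif_neg (by omega)]
    exact ⟨by rw [hz, hjk'], SimpleGraph.Reachable.refl z⟩

variable [Fintype V]

/-- A greedy packing `k`-coloring forces `k ≤ |V|`. -/
lemma aux_le_card {G : SimpleGraph V} {k : ℕ} {c : V → ℕ}
    (hg : IsGreedyPackingColoring G k c) : k ≤ Fintype.card V := by
  classical
  obtain ⟨z, g, hz, hgspec⟩ := aux_exists_rep hg
  have hinj : Set.InjOn g (Finset.Icc 1 k) := by
    intro a ha b hb hab
    simp only [Finset.coe_Icc, Set.mem_Icc] at ha hb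
    have h1 := (hgspec a ha.1 ha.2).1
    have h2 := (hgspec b hb.1 hb.2).1
    rw [← h1, ← h2, hab]
  calc k = (Finset.Icc 1 k).card := by rw [Nat.card_Icc]; omega
    _ = ((Finset.Icc 1 k).image g).card := (Finset.card_image_of_injOn hinj).symm
    _ ≤ Finset.univ.card := Finset.card_le_card (Finset.subset_univ _)
    _ = Fintype.card V := Finset.card_univ

/-- For a disconnected graph, a greedy packing `k`-coloring forces `k ≤ |V| - 1`. -/
lemma aux_le_card_sub_one {G : SimpleGraph V} [Nonempty V] (hdisc : ¬ G.Connected)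
    {k : ℕ} {c : V → ℕ} (hg : IsGreedyPackingColoring G k c) :
    k ≤ Fintype.card V - 1 := by
  classical
  have hle := aux_le_card hg
  by_contra hcon
  have hk : k = Fintype.card V := by
    have : 1 ≤ Fintype.card V := Fintype.card_pos
    omega
  -- colors are used exactly once; the color-1 vertex is universal, so G is connected
  obtain ⟨z, g, hz, hgspec⟩ := aux_exists_rep hg
  have hk1 : 1 ≤ k := by
    obtain ⟨v⟩ := ‹Nonempty V›
    have := hg.1.1 v
    omega
  have hinj : Set.InjOn g (Finset.Icc 1 k) := by
    intro a ha b hb hab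
    simp only [Finset.coe_Icc, Set.mem_Icc] at ha hb
    have h1 := (hgspec a ha.1 ha.2).1
    have h2 := (hgspec b hb.1 hb.2).1
    rw [← h1, ← h2, hab]
  have himg : (Finset.Icc 1 k).image g = Finset.univ := by
    apply Finset.eq_univ_of_card
    rw [Finset.card_image_of_injOn hinj, Nat.card_Icc, hk]
    omega
  have hall : ∀ v : V, ∃ j, 1 ≤ j ∧ j ≤ k ∧ g j = v := by
    intro v
    have : v ∈ (Finset.Icc 1 k).image g := by rw [himg]; exact Finset.mem_univ v
    obtain ⟨j, hj, hgj⟩ := Finset.mem_image.mp this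
    simp only [Finset.mem_Icc] at hj
    exact ⟨j, hj.1, hj.2, hgj⟩
  set w₁ := g 1 with hw₁
  have hreach : ∀ v : V, G.Reachable v w₁ := by
    intro v
    obtain ⟨j, hj1, hjk, hgj⟩ := hall v
    by_cases hj : j = 1
    · rw [← hgj, hj]
    · have hcv : 2 ≤ c v := by
        have := (hgspec j hj1 hjk).1
        rw [hgj] at this
        omega
      obtain ⟨p, hp1, hpadj⟩ := aux_adj_one hg hcv
      obtain ⟨j', hj'1, hj'k, hgj'⟩ := hall p
      have : j' = 1 := by
        have := (hgspec j' hj'1 hj'k).1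
        rw [hgj'] at this
        omega
      have hpw : p = w₁ := by rw [← hgj', this]
      exact (hpadj.reachable.symm).trans (by rw [hpw])
  exact hdisc (G.connected_iff.mpr
    ⟨fun u v => (hreach u).trans (hreach v).symm, ‹Nonempty V›⟩)

end Aux

/-- A disconnected graph `G` on `n` vertices satisfies `Γρ(G) = n - 1` iff
`G` is the disjoint union of `K₁` (an isolated vertex) and a graph `G'` having a universal
vertex. -/
theorem grundyPackingChromaticNumber_eq_card_sub_one_iff_of_disconnected {V : Type*}
    [Fintype V] [Nonempty V] (G : SimpleGraph V) (hdisc : ¬ G.Connected) :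
    grundyPackingChromaticNumber G = Fintype.card V - 1 ↔
    ∃ v₀ : V, (∀ u : V, ¬ G.Adj v₀ u) ∧
      ∃ w : V, w ≠ v₀ ∧ ∀ u : V, u ≠ w → u ≠ v₀ → G.Adj w u := by
  classical
  set n := Fintype.card V with hn
  -- G is disconnected, so there are two non-reachable (hence distinct) vertices
  have hpre : ¬ G.Preconnected := fun h => hdisc (G.connected_iff.mpr ⟨h, ‹Nonempty V›⟩)
  rw [SimpleGraph.Preconnected] at hpre
  push_neg at hpre
  obtain ⟨x, y, hxy⟩ := hpre
  have hxyne : x ≠ y := fun h => hxy (h ▸ SimpleGraph.Reachable.refl x)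
  have hn2 : 2 ≤ n := Fintype.one_lt_card_iff.mpr ⟨x, y, hxyne⟩
  unfold grundyPackingChromaticNumber
  set T : Set ℕ := {k | ∃ c : V → ℕ, IsGreedyPackingColoring G k c} with hT
  have hbdd : BddAbove T := ⟨n, fun k ⟨c, hc⟩ => aux_le_card hc⟩
  constructor
  · -- forward direction
    intro hsup
    have hTne : T.Nonempty := by
      by_contra h
      rw [Set.not_nonempty_iff_eq_empty.mp h, csSup_empty] at hsup
      simp only [Nat.bot_eq_zero] at hsup
      omega
    have hmem : n - 1 ∈ T := hsup ▸ Nat.sSup_mem hTne hbdd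
    obtain ⟨c, hc⟩ := hmem
    obtain ⟨z, g, hz, hgspec⟩ := aux_exists_rep hc
    -- find the vertex not reachable from z
    have hv₀ : ∃ v₀, ¬ G.Reachable z v₀ := by
      by_cases hzx : G.Reachable z x
      · exact ⟨y, fun h => hxy (hzx.symm.trans h)⟩
      · exact ⟨x, hzx⟩
    obtain ⟨v₀, hnr⟩ := hv₀
    -- the image of colors 1..n-1 is all of V except v₀
    set S : Finset V := (Finset.Icc 1 (n - 1)).image g with hS
    have hinj : Set.InjOn g (Finset.Icc 1 (n - 1)) := by
      intro a ha b hb hab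
      simp only [Finset.coe_Icc, Set.mem_Icc] at ha hb
      have h1 := (hgspec a ha.1 ha.2).1
      have h2 := (hgspec b hb.1 hb.2).1
      rw [← h1, ← h2, hab]
    have hScard : S.card = n - 1 := by
      rw [hS, Finset.card_image_of_injOn hinj, Nat.card_Icc]
      omega
    have hSsub : S ⊆ Finset.univ.erase v₀ := by
      intro u hu
      obtain ⟨j, hj, hgj⟩ := Finset.mem_image.mp hu
      simp only [Finset.mem_Icc] at hj
      have hreach := (hgspec j hj.1 hj.2).2
      refine Finset.mem_erase.mpr ⟨?_, Finset.mem_univ u⟩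
      intro h
      rw [hgj, h] at hreach
      exact hnr hreach.symm
    have hSeq : S = Finset.univ.erase v₀ := by
      apply Finset.eq_of_subset_of_card_le hSsub
      rw [Finset.card_erase_of_mem (Finset.mem_univ v₀), Finset.card_univ, hScard]
    -- v₀ is isolated
    have hiso : ∀ u : V, ¬ G.Adj v₀ u := by
      intro u hadj
      have hune : u ≠ v₀ := fun h => G.loopless.irrefl v₀ (h ▸ hadj)
      have : u ∈ S := hSeq ▸ Finset.mem_erase.mpr ⟨hune, Finset.mem_univ u⟩
      obtain ⟨j, hj, hgj⟩ := Finset.mem_image.mp this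
      simp only [Finset.mem_Icc] at hj
      have hreach := (hgspec j hj.1 hj.2).2
      rw [hgj] at hreach
      exact hnr (hreach.symm.trans hadj.symm.reachable)
    refine ⟨v₀, hiso, g 1, ?_, ?_⟩
    · -- g 1 ≠ v₀
      have : g 1 ∈ S := Finset.mem_image.mpr ⟨1, Finset.mem_Icc.mpr ⟨le_rfl, by omega⟩, rfl⟩
      exact (Finset.mem_erase.mp (hSeq ▸ this)).1
    · -- g 1 is adjacent to every other vertex except v₀
      intro u huw huv₀
      have hu : u ∈ S := hSeq ▸ Finset.mem_erase.mpr ⟨huv₀, Finset.mem_univ u⟩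
      obtain ⟨j, hj, hgj⟩ := Finset.mem_image.mp hu
      simp only [Finset.mem_Icc] at hj
      have hcu : c u = j := hgj ▸ (hgspec j hj.1 hj.2).1
      have hj1 : j ≠ 1 := fun h => huw (by rw [← hgj, h])
      have hcu2 : 2 ≤ c u := by omega
      obtain ⟨p, hp1, hpadj⟩ := aux_adj_one hc hcu2
      have hpv₀ : p ≠ v₀ := fun h => hiso u (h ▸ hpadj)
      have hpS : p ∈ S := hSeq ▸ Finset.mem_erase.mpr ⟨hpv₀, Finset.mem_univ p⟩
      obtain ⟨j', hj', hgj'⟩ := Finset.mem_image.mp hpS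
      simp only [Finset.mem_Icc] at hj'
      have hcp : c p = j' := hgj' ▸ (hgspec j' hj'.1 hj'.2).1
      have : j' = 1 := by omega
      have hpw : p = g 1 := by rw [← hgj', this]
      exact hpw ▸ hpadj
  · -- backward direction
    rintro ⟨v₀, hiso, w, hwv₀, hwall⟩
    -- construct the greedy packing (n-1)-coloring
    set s : Finset V := Finset.univ \ {v₀, w} with hs
    have hmem_s : ∀ v, v ∈ s ↔ v ≠ v₀ ∧ v ≠ w := by
      intro v
      simp [hs]
    have hcard_s : s.card = n - 2 := by
      rw [hs, Finset.card_sdiff_of_subset (Finset.subset_univ _), Finset.card_univ,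
        Finset.card_pair (Ne.symm hwv₀)]
    let e : ↥s ≃ Fin s.card := s.equivFin
    set c : V → ℕ := fun v => if h : v ∈ s then (e ⟨v, h⟩ : ℕ) + 2 else 1 with hcdef
    have hc_s : ∀ v (h : v ∈ s), c v = (e ⟨v, h⟩ : ℕ) + 2 := by
      intro v h
      simp only [hcdef, dif_pos h]
    have hc_ns : ∀ v, v ∉ s → c v = 1 := by
      intro v h
      simp only [hcdef, dif_neg h]
    have hcw : c w = 1 := hc_ns w (fun h => ((hmem_s w).mp h).2 rfl)
    have hcv₀ : c v₀ = 1 := hc_ns v₀ (fun h => ((hmem_s v₀).mp h).1 rfl)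
    have hadj_w : ∀ v ∈ s, G.Adj w v := by
      intro v hv
      obtain ⟨h1, h2⟩ := (hmem_s v).mp hv
      exact hwall v h2 h1
    have hub : ∀ v, c v ≤ n - 1 := by
      intro v
      by_cases h : v ∈ s
      · rw [hc_s v h]
        have := (e ⟨v, h⟩).2
        omega
      · rw [hc_ns v h]; omega
    have hgreedy : IsGreedyPackingColoring G (n - 1) c := by
      refine ⟨⟨fun v => ⟨?_, hub v⟩, ?_⟩, ?_, ?_⟩
      · by_cases h : v ∈ s
        · rw [hc_s v h]; omega
        · rw [hc_ns v h]
      · -- packing condition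
        intro u v huv hcuv hr
        by_cases hu : u ∈ s
        · by_cases hv : v ∈ s
          · exfalso
            rw [hc_s u hu, hc_s v hv] at hcuv
            have : e ⟨u, hu⟩ = e ⟨v, hv⟩ := Fin.ext (by omega)
            have := e.injective this
            exact huv (congrArg Subtype.val this)
          · exfalso
            rw [hc_s u hu, hc_ns v hv] at hcuv
            omega
        · by_cases hv : v ∈ s
          · exfalso
            rw [hc_ns u hu, hc_s v hv] at hcuv
            omega
          · -- both have color 1; {u,v} = {v₀,w}, not reachable
            exfalso
            have hu' : u = v₀ ∨ u = w := by
              by_contra h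
              push_neg at h
              exact hu ((hmem_s u).mpr h)
            have hv' : v = v₀ ∨ v = w := by
              by_contra h
              push_neg at h
              exact hv ((hmem_s v).mpr h)
            rcases hu' with hu' | hu' <;> rcases hv' with hv' | hv'
            · exact huv (hu'.trans hv'.symm)
            · have : v = v₀ := aux_reach_isolated hiso (by rw [← hu']; exact hr.symm)
              exact hwv₀ (hv' ▸ this)
            · have : u = v₀ := aux_reach_isolated hiso (by rw [← hv']; exact hr)
              exact hwv₀ (hu' ▸ this)
            · exact huv (hu'.trans hv'.symm)
      · -- color n-1 is used
        by_cases hn3 : 3 ≤ n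
        · have hlt : n - 3 < s.card := by omega
          refine ⟨(e.symm ⟨n - 3, hlt⟩ : ↥s), ?_⟩
          have hm := (e.symm ⟨n - 3, hlt⟩).2
          rw [hc_s _ hm]
          have : (⟨(e.symm ⟨n - 3, hlt⟩ : ↥s), hm⟩ : ↥s) = e.symm ⟨n - 3, hlt⟩ := rfl
          rw [this, Equiv.apply_symm_apply]
          simp only [Fin.val_mk]
          omega
        · exact ⟨w, by rw [hcw]; omega⟩
      · -- greedy condition
        intro v j hj1 hjlt
        have hvs : v ∈ s := by
          by_contra h
          rw [hc_ns v h] at hjlt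
          omega
        rw [hc_s v hvs] at hjlt
        by_cases hj : j = 1
        · refine ⟨w, by rw [hcw, hj], (hadj_w v hvs).reachable, ?_⟩
          rw [hj, SimpleGraph.dist_eq_one_iff_adj.mpr (hadj_w v hvs)]
        · have hj2 : 2 ≤ j := by omega
          have hlt : j - 2 < s.card := by
            have := (e ⟨v, hvs⟩).2
            omega
          set u : V := ((e.symm ⟨j - 2, hlt⟩ : ↥s) : V) with hu
          have hum := (e.symm ⟨j - 2, hlt⟩).2
          have hcu : c u = j := by
            rw [hc_s u hum]
            have : (⟨u, hum⟩ : ↥s) = e.symm ⟨j - 2, hlt⟩ := rfl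
            rw [this, Equiv.apply_symm_apply]
            simp only [Fin.val_mk]
            omega
          have hadju : G.Adj w u := hadj_w u hum
          have hadjv : G.Adj w v := hadj_w v hvs
          refine ⟨u, hcu, hadju.reachable.symm.trans hadjv.reachable, ?_⟩
          have hd := SimpleGraph.dist_le
            (SimpleGraph.Walk.cons hadju.symm (SimpleGraph.Walk.cons hadjv SimpleGraph.Walk.nil))
          simp only [SimpleGraph.Walk.length_cons, SimpleGraph.Walk.length_nil] at hd
          omega
    -- now compute the sSup
    have hmem : n - 1 ∈ T := ⟨c, hgreedy⟩
    apply le_antisymm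
    · exact csSup_le ⟨n - 1, hmem⟩ (fun k ⟨c', hc'⟩ => aux_le_card_sub_one hdisc hc')
    · exact le_csSup hbdd hmem
end

section
/- If G is a connected graph with i(G) = 2, then rad(G) ∈ {2,3} and diam(G) ∈ {2,3,4,5}. -/
open SimpleGraph

lemma step_lemma {V : Type*} (G : SimpleGraph V) (hG : G.Connected) (a b : V)
    (h : 1 ≤ G.dist a b) : ∃ x, G.Adj a x ∧ G.dist x b + 1 = G.dist a b := by
  obtain ⟨p, hp⟩ := (hG a b).exists_walk_length_eq_dist
  match p, hp with
  | .nil, hp => simp [← hp] at h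
  | .cons (v := x) hax q, hp =>
    refine ⟨x, hax, ?_⟩
    have h1 : G.dist x b ≤ q.length := SimpleGraph.dist_le q
    have h2 : G.dist a b ≤ G.dist a x + G.dist x b := hG.dist_triangle
    have h3 : G.dist a x = 1 := (SimpleGraph.dist_eq_one_iff_adj).2 hax
    simp [SimpleGraph.Walk.length_cons] at hp
    omega

/-- If `G` is connected with `i(G) = 2`, then `rad(G) ∈ {2,3}` and
`diam(G) ∈ {2,3,4,5}`. -/
theorem radius_diam_of_indepDomNum_eq_two {V : Type*} [Fintype V] (G : SimpleGraph V)
    (hG : G.Connected) (hi : indepDomNum G = 2) :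
    graphRadius G ∈ ({2, 3} : Set ℕ) ∧ graphDiam G ∈ ({2, 3, 4, 5} : Set ℕ) := by
  classical
  -- Extract a maximal independent set of size 2
  have hmem : 2 ∈ {n | ∃ s : Finset V, IsMaxIndepFinset G s ∧ s.card = n} := by
    rw [← hi]
    apply Nat.sInf_mem
    by_contra h
    rw [Set.not_nonempty_iff_eq_empty] at h
    rw [indepDomNum, h, Nat.sInf_empty] at hi
    exact absurd hi (by norm_num)
  obtain ⟨s, hs, hcard⟩ := hmem
  obtain ⟨a, b, hne, hseq⟩ := Finset.card_eq_two.1 hcard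
  have has : a ∈ s := by rw [hseq]; simp
  have hbs : b ∈ s := by rw [hseq]; simp
  have hab : ¬ G.Adj a b := hs.1 a has b hbs
  -- Domination
  have hdom : ∀ v : V, v = a ∨ v = b ∨ G.Adj a v ∨ G.Adj b v := by
    intro v
    by_contra h
    push_neg at h
    obtain ⟨hva, hvb, hav, hbv⟩ := h
    have hind : IsIndepFinset G (insert v s) := by
      intro u hu w hw hadj
      rw [Finset.mem_insert, hseq] at hu hw
      simp only [Finset.mem_insert, Finset.mem_singleton] at hu hw
      rcases hu with rfl | rfl | rfl <;> rcases hw with rfl | rfl | rfl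
      · exact G.irrefl hadj
      · exact hav hadj.symm
      · exact hbv hadj.symm
      · exact hav hadj
      · exact G.irrefl hadj
      · exact hab hadj
      · exact hbv hadj
      · exact hab hadj.symm
      · exact G.irrefl hadj
    have heq := hs.2 _ hind (Finset.subset_insert v s)
    have hv : v ∈ s := heq ▸ Finset.mem_insert_self v s
    rw [hseq] at hv
    simp only [Finset.mem_insert, Finset.mem_singleton] at hv
    rcases hv with rfl | rfl
    · exact hva rfl
    · exact hvb rfl
  -- Distance between a and b
  have hd2 : 2 ≤ G.dist a b := by
    have h1 : 0 < G.dist a b := hG.pos_dist_of_ne hne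
    have h2 : G.dist a b ≠ 1 := fun h => hab (SimpleGraph.dist_eq_one_iff_adj.1 h)
    omega
  have hd3 : G.dist a b ≤ 3 := by
    obtain ⟨x, hax, hx⟩ := step_lemma G hG a b (by omega)
    obtain ⟨y, hxy, hy⟩ := step_lemma G hG x b (by omega)
    have hya : y ≠ a := by rintro rfl; omega
    have hay : ¬ G.Adj a y := by
      intro h
      have h1 : G.dist a y = 1 := SimpleGraph.dist_eq_one_iff_adj.2 h
      have h2 : G.dist a b ≤ G.dist a y + G.dist y b := hG.dist_triangle
      omega
    rcases hdom y with rfl | rfl | h | h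
    · exact absurd rfl hya
    · rw [SimpleGraph.dist_self] at hy; omega
    · exact absurd h hay
    · have : G.dist y b = 1 := SimpleGraph.dist_eq_one_iff_adj.2 h.symm
      omega
  -- auxiliary: distance from any vertex to a or b
  have hclose : ∀ v : V, G.dist v a ≤ 1 ∨ G.dist v b ≤ 1 := by
    intro v
    rcases hdom v with rfl | rfl | h | h
    · left; simp [SimpleGraph.dist_self]
    · right; simp [SimpleGraph.dist_self]
    · left; exact le_of_eq (SimpleGraph.dist_eq_one_iff_adj.2 h.symm)
    · right; exact le_of_eq (SimpleGraph.dist_eq_one_iff_adj.2 h.symm)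
  -- radius ≥ 2
  have hne' : Nonempty V := ⟨a⟩
  have hrad2 : 2 ≤ graphRadius G := by
    by_contra h
    push_neg at h
    obtain ⟨v, hv⟩ := Nat.sInf_mem (Set.range_nonempty (_root_.eccent G))
    have hecc : _root_.eccent G v ≤ 1 := by
      unfold graphRadius at h
      omega
    have hdomv : ∀ u : V, G.dist v u ≤ 1 :=
      fun u => le_trans (Finset.le_sup (Finset.mem_univ u)) hecc
    have hmax : IsMaxIndepFinset G {v} := by
      constructor
      · intro x hx y hy hadj
        simp only [Finset.mem_singleton] at hx hy
        subst hx; subst hy; exact G.irrefl hadj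
      · intro t ht hsub
        apply Finset.Subset.antisymm hsub
        intro u hu
        simp only [Finset.mem_singleton]
        by_contra hune
        have h1 : 0 < G.dist v u := hG.pos_dist_of_ne (Ne.symm hune)
        have h2 : G.dist v u = 1 := by have := hdomv u; omega
        exact ht v (hsub (Finset.mem_singleton_self v)) u hu
          (SimpleGraph.dist_eq_one_iff_adj.1 h2)
    have h1 : indepDomNum G ≤ 1 :=
      Nat.sInf_le ⟨{v}, hmax, Finset.card_singleton v⟩
    omega
  -- radius ≤ 3
  have hrad3 : graphRadius G ≤ 3 := by
    obtain ⟨x, hax, hx⟩ := step_lemma G hG a b (by omega)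
    have hxa : G.dist x a = 1 := SimpleGraph.dist_eq_one_iff_adj.2 hax.symm
    have heccx : _root_.eccent G x ≤ 3 := by
      apply Finset.sup_le
      intro u _
      have htri_a : G.dist x u ≤ G.dist x a + G.dist a u := hG.dist_triangle
      have htri_b : G.dist x u ≤ G.dist x b + G.dist b u := hG.dist_triangle
      rcases hdom u with rfl | rfl | h | h
      · omega
      · omega
      · have : G.dist a u = 1 := SimpleGraph.dist_eq_one_iff_adj.2 h; omega
      · have : G.dist b u = 1 := SimpleGraph.dist_eq_one_iff_adj.2 h; omega
    exact le_trans (Nat.sInf_le ⟨x, rfl⟩) heccx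
  -- diameter ≥ 2
  have hdiam2 : 2 ≤ graphDiam G := by
    have h1 : G.dist a b ≤ _root_.eccent G a := Finset.le_sup (Finset.mem_univ b)
    have h2 : _root_.eccent G a ≤ graphDiam G := Finset.le_sup (Finset.mem_univ a)
    omega
  -- diameter ≤ 5
  have hdiam5 : graphDiam G ≤ 5 := by
    apply Finset.sup_le
    intro v _
    apply Finset.sup_le
    intro u _
    have tva : G.dist v u ≤ G.dist v a + G.dist a u := hG.dist_triangle
    have tvb : G.dist v u ≤ G.dist v b + G.dist b u := hG.dist_triangle
    have tab : G.dist a u ≤ G.dist a b + G.dist b u := hG.dist_triangle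
    have tba : G.dist b u ≤ G.dist b a + G.dist a u := hG.dist_triangle
    have cba : G.dist b a = G.dist a b := SimpleGraph.dist_comm ..
    have cau : G.dist a u = G.dist u a := SimpleGraph.dist_comm ..
    have cbu : G.dist b u = G.dist u b := SimpleGraph.dist_comm ..
    rcases hclose v with h1 | h1 <;> rcases hclose u with h2 | h2 <;> omega
  refine ⟨?_, ?_⟩
  · simp only [Set.mem_insert_iff, Set.mem_singleton_iff]; omega
  · simp only [Set.mem_insert_iff, Set.mem_singleton_iff]; omega
end

section
/- Let G be a connected graph on n vertices. Then Γρ(G) = n − 1 if and only if all of the following hold: (i) i(G) = 2; (ii) diam(G) ≤ 4; (iii) if rad(G) = 3, then there exist a maximal independent set {x, y} of cardinality 2 with d_G(x,y) = 3 and a vertex w ∈ N(x) such that d_G(w,z) ≤ 2 for every z ∈ N(y); (iv) if rad(G) = 2 and diam(G) = 4, then there exist a maximal independent set A of cardinality 2 and two distinct vertices w, z ∉ A such that ecc(w) = 2 (w is a central vertex) and ecc(z) ≤ 3 (z is a non-diametrical vertex). -/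
open SimpleGraph

set_option linter.unusedSectionVars false

section AuxBasic

variable {V : Type*} [Fintype V] [DecidableEq V] {G : SimpleGraph V} {x y u v w : V}

lemma aux_adj_of_dist_le_one (hr : G.Reachable u v) (h : u ≠ v) (hd : G.dist u v ≤ 1) :
    G.Adj u v :=
  SimpleGraph.dist_eq_one_iff_adj.mp (le_antisymm hd (hr.pos_dist_of_ne h))

lemma aux_dist_adj (h : G.Adj u v) : G.dist u v = 1 :=
  SimpleGraph.dist_eq_one_iff_adj.mpr h

lemma aux_dist_ge_two (hG : G.Connected) (h : u ≠ v) (hn : ¬ G.Adj u v) :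
    2 ≤ G.dist u v := by
  have h1 := (hG u v).pos_dist_of_ne h
  rcases Nat.lt_or_ge (G.dist u v) 2 with h2 | h2
  · exact absurd (aux_adj_of_dist_le_one (hG u v) h (by omega)) hn
  · exact h2

lemma aux_dist_le_eccent (v u : V) : G.dist v u ≤ _root_.eccent G v :=
  Finset.le_sup (Finset.mem_univ u)

lemma aux_eccent_le {k : ℕ} (h : ∀ u, G.dist v u ≤ k) : _root_.eccent G v ≤ k :=
  Finset.sup_le fun u _ => h u

lemma aux_eccent_le_graphDiam (v : V) : _root_.eccent G v ≤ graphDiam G :=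
  Finset.le_sup (Finset.mem_univ v)

lemma aux_dist_le_graphDiam (u v : V) : G.dist u v ≤ graphDiam G :=
  le_trans (aux_dist_le_eccent u v) (aux_eccent_le_graphDiam u)

lemma aux_graphDiam_le {k : ℕ} (h : ∀ u v, G.dist u v ≤ k) : graphDiam G ≤ k :=
  Finset.sup_le fun v _ => aux_eccent_le (h v)

lemma aux_graphRadius_le_eccent (v : V) : graphRadius G ≤ _root_.eccent G v :=
  Nat.sInf_le ⟨v, rfl⟩

lemma aux_exists_central [Nonempty V] (G : SimpleGraph V) :
    ∃ v, _root_.eccent G v = graphRadius G :=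
  Nat.sInf_mem (Set.range_nonempty _)

lemma aux_exists_diam_pair [Nonempty V] (G : SimpleGraph V) :
    ∃ u v : V, G.dist u v = graphDiam G := by
  obtain ⟨v, -, hv⟩ := Finset.exists_mem_eq_sup Finset.univ Finset.univ_nonempty (_root_.eccent G)
  obtain ⟨u, -, hu⟩ :=
    Finset.exists_mem_eq_sup Finset.univ Finset.univ_nonempty (fun u => G.dist v u)
  exact ⟨v, u, by rw [show graphDiam G = _root_.eccent G v from hv, show _root_.eccent G v = G.dist v u from hu]⟩

lemma aux_exists_adj_dist (h : 1 ≤ G.dist x y) :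
    ∃ m, G.Adj x m ∧ G.dist m y + 1 ≤ G.dist x y := by
  obtain ⟨p, hp⟩ := SimpleGraph.exists_walk_of_dist_ne_zero (G := G) (u := x) (v := y) (by omega)
  cases p with
  | nil => simp at hp; simp at h
  | cons ha q =>
      refine ⟨_, ha, ?_⟩
      have h2 := SimpleGraph.dist_le q
      simp only [SimpleGraph.Walk.length_cons] at hp
      omega

lemma aux_common_neighbor (h : G.dist x y = 2) : ∃ m, G.Adj x m ∧ G.Adj m y := by
  have h1 : 1 ≤ G.dist x y := by omega
  obtain ⟨m, hm, hd⟩ := aux_exists_adj_dist h1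
  have hmy : m ≠ y := by
    rintro rfl
    have := aux_dist_adj hm
    omega
  have hr : G.Reachable m y :=
    (hm.symm.reachable).trans (SimpleGraph.Reachable.of_dist_ne_zero (by omega))
  exact ⟨m, hm, aux_adj_of_dist_le_one hr hmy (by omega)⟩

lemma aux_pair_dist_le_three (hG : G.Connected) (hxy : x ≠ y) (hnadj : ¬ G.Adj x y)
    (hdom : ∀ v, v ≠ x → v ≠ y → (G.Adj x v ∨ G.Adj y v)) : G.dist x y ≤ 3 := by
  by_contra hc
  push_neg at hc
  have hge1 : 1 ≤ G.dist x y := by omega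
  obtain ⟨m1, hm1, hd1⟩ := aux_exists_adj_dist hge1
  have hm1y : 1 ≤ G.dist m1 y := by
    rcases Nat.eq_zero_or_pos (G.dist m1 y) with h0 | h
    · exfalso
      have hr : G.Reachable m1 y := (hm1.symm.reachable).trans (hG x y)
      have : m1 = y := (hr.dist_eq_zero_iff).mp h0
      exact hnadj (this ▸ hm1)
    · exact h
  obtain ⟨m2, hm2, hd2⟩ := aux_exists_adj_dist hm1y
  have hxm2 : G.dist x m2 ≤ 2 := by
    calc G.dist x m2 ≤ G.dist x m1 + G.dist m1 m2 := hG.dist_triangle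
    _ ≤ 2 := by rw [aux_dist_adj hm1, aux_dist_adj hm2]
  have htri : G.dist x y ≤ G.dist x m2 + G.dist m2 y := hG.dist_triangle
  have h1 : m2 ≠ x := by
    rintro rfl
    rw [SimpleGraph.dist_self] at hxm2 htri
    omega
  have h2 : ¬ G.Adj x m2 := by
    intro hadj
    have := aux_dist_adj hadj
    omega
  have h3 : m2 ≠ y := by
    rintro rfl
    rw [SimpleGraph.dist_self] at htri
    omega
  have h4 : ¬ G.Adj y m2 := by
    intro hadj
    have : G.dist m2 y = 1 := by rw [SimpleGraph.dist_comm]; exact aux_dist_adj hadj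
    omega
  rcases hdom m2 h1 h3 with h | h
  · exact h2 h
  · exact h4 h

end AuxBasic


section AuxMaxInd

variable {V : Type*} [Fintype V] [DecidableEq V] {G : SimpleGraph V} {x y u v w : V}

lemma aux_maxind_pair (hxy : x ≠ y) (h : IsMaxIndepFinset G {x, y}) :
    ¬ G.Adj x y ∧ ∀ v, v ≠ x → v ≠ y → (G.Adj x v ∨ G.Adj y v) := by
  obtain ⟨hind, hmax⟩ := h
  have hnadj : ¬ G.Adj x y := hind x (by simp) y (by simp)
  refine ⟨hnadj, fun v hvx hvy => ?_⟩
  by_contra hcon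
  push_neg at hcon
  have hins : IsIndepFinset G (insert v {x, y}) := by
    intro a ha b hb
    simp only [Finset.mem_insert, Finset.mem_singleton] at ha hb
    rcases ha with rfl | rfl | rfl <;> rcases hb with rfl | rfl | rfl <;>
      first
        | exact fun hadj => G.irrefl hadj
        | exact fun hadj => hcon.1 hadj.symm
        | exact fun hadj => hcon.2 hadj.symm
        | exact fun hadj => hcon.1 hadj
        | exact fun hadj => hcon.2 hadj
        | exact fun hadj => hnadj hadj
        | exact fun hadj => hnadj hadj.symm
  have heq := hmax _ hins (Finset.subset_insert _ _)
  have : v ∈ ({x, y} : Finset V) := heq ▸ Finset.mem_insert_self v _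
  simp only [Finset.mem_insert, Finset.mem_singleton] at this
  tauto

lemma aux_maxind_pair_of (hnadj : ¬ G.Adj x y)
    (hdom : ∀ v, v ≠ x → v ≠ y → (G.Adj x v ∨ G.Adj y v)) :
    IsMaxIndepFinset G {x, y} := by
  constructor
  · intro a ha b hb
    simp only [Finset.mem_insert, Finset.mem_singleton] at ha hb
    rcases ha with rfl | rfl <;> rcases hb with rfl | rfl
    · exact fun hadj => G.irrefl hadj
    · exact hnadj
    · exact fun hadj => hnadj hadj.symm
    · exact fun hadj => G.irrefl hadj
  · intro t hind hsub
    refine Finset.Subset.antisymm hsub fun v hv => ?_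
    by_contra hvmem
    simp only [Finset.mem_insert, Finset.mem_singleton] at hvmem
    push_neg at hvmem
    rcases hdom v hvmem.1 hvmem.2 with h | h
    · exact hind x (hsub (by simp)) v hv h
    · exact hind y (hsub (by simp)) v hv h

lemma aux_not_dom (hi : indepDomNum G = 2) (v : V) : ∃ u, u ≠ v ∧ ¬ G.Adj v u := by
  by_contra hc
  push_neg at hc
  have hmax : IsMaxIndepFinset G {v} := by
    constructor
    · intro a ha b hb
      simp only [Finset.mem_singleton] at ha hb
      subst ha; subst hb
      exact fun hadj => G.irrefl hadj
    · intro t hind hsub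
      refine Finset.Subset.antisymm hsub fun u hu => ?_
      simp only [Finset.mem_singleton]
      by_contra huv
      exact hind v (hsub (by simp)) u hu (hc u huv)
  have h1 : indepDomNum G ≤ 1 := Nat.sInf_le ⟨{v}, hmax, by simp⟩
  omega

lemma aux_neighbor_outside (hG : G.Connected) (hnadj : ¬ G.Adj x y) (hd3 : G.dist x y = 3)
    {m : V} (hm : ∀ u, G.dist m u ≤ 2) : ∃ t, G.Adj m t ∧ t ≠ x ∧ t ≠ y := by
  have key : ∀ a b : V, G.dist a b = 3 → G.dist m b = 2 →
      ∃ t, G.Adj m t ∧ t ≠ a ∧ t ≠ b := by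
    intro a b hab hmb
    obtain ⟨s, hs1, hs2⟩ := aux_common_neighbor hmb
    have hsb : s ≠ b := G.ne_of_adj hs2
    have hsa : s ≠ a := by
      intro h
      have h1 := aux_dist_adj hs2
      rw [h] at h1
      omega
    exact ⟨s, hs1, hsa, hsb⟩
  by_cases hmx : G.Adj m x <;> by_cases hmy : G.Adj m y
  · exfalso
    have hxm : G.dist x m = 1 := by rw [SimpleGraph.dist_comm]; exact aux_dist_adj hmx
    have h2 : G.dist x y ≤ G.dist x m + G.dist m y := hG.dist_triangle
    rw [hxm, aux_dist_adj hmy] at h2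
    omega
  · -- adj m x, not adj m y : dist m y = 2
    have hmy2 : G.dist m y = 2 := by
      have h1 : m ≠ y := by rintro rfl; exact hnadj hmx.symm
      have h2 := aux_dist_ge_two hG h1 hmy
      have h3 := hm y
      omega
    exact key x y hd3 hmy2
  · -- adj m y, not adj m x : dist m x = 2
    have hmx2 : G.dist m x = 2 := by
      have h1 : m ≠ x := by rintro rfl; exact hnadj hmy
      have h2 := aux_dist_ge_two hG h1 hmx
      have h3 := hm x
      omega
    obtain ⟨t, ht, hty, htx⟩ := key y x (by rwa [SimpleGraph.dist_comm]) hmx2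
    exact ⟨t, ht, htx, hty⟩
  · have hmy2 : G.dist m y = 2 := by
      have h1 : m ≠ y := by
        rintro rfl
        have h4 := hm x
        rw [SimpleGraph.dist_comm] at h4
        omega
      have h2 := aux_dist_ge_two hG h1 hmy
      have h3 := hm y
      omega
    exact key x y hd3 hmy2

end AuxMaxInd


section AuxColoring

variable {V : Type*} [Fintype V] [DecidableEq V] {G : SimpleGraph V} {x y u v w : V}

lemma aux_greedy_le_card {k : ℕ} {c : V → ℕ} (h : IsGreedyPackingColoring G k c) :
    k ≤ Fintype.card V := by
  obtain ⟨hpack, ⟨t, ht⟩, hgr⟩ := h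
  have hf : ∀ j : Fin k, ∃ u, c u = j.val + 1 := by
    intro j
    rcases Nat.lt_or_ge (j.val + 1) k with hlt | hge
    · obtain ⟨u, hu, -, -⟩ := hgr t (j.val + 1) (by omega) (by omega)
      exact ⟨u, hu⟩
    · have := j.isLt
      exact ⟨t, by omega⟩
  choose F hF using hf
  have hinj : Function.Injective F := by
    intro a b hab
    have h1 := hF a
    rw [hab, hF b] at h1
    exact Fin.ext (by omega)
  calc k = Fintype.card (Fin k) := (Fintype.card_fin k).symm
  _ ≤ Fintype.card V := Fintype.card_le_of_injective F hinj

lemma aux_dom_greedy (hG : G.Connected) {x1 : V} (hdom : ∀ v, v ≠ x1 → G.Adj x1 v) :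
    ∃ c, IsGreedyPackingColoring G (Fintype.card V) c := by
  have hne : Nonempty V := ⟨x1⟩
  have hn : 1 ≤ Fintype.card V := Fintype.card_pos
  set n := Fintype.card V with hndef
  let e0 := Fintype.equivFin V
  let e : V ≃ Fin n := e0.trans (Equiv.swap (e0 x1) ⟨0, by omega⟩)
  have hex1 : e x1 = ⟨0, by omega⟩ := by simp [e, Equiv.swap_apply_left]
  have hd1 : ∀ w, G.dist x1 w ≤ 1 := by
    intro w
    by_cases hw : w = x1
    · simp [hw, SimpleGraph.dist_self]
    · exact le_of_eq (aux_dist_adj (hdom w hw))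
  refine ⟨fun v => (e v).val + 1, ⟨fun v => ?_, ?_⟩, ?_, ?_⟩
  · show 1 ≤ (e v).val + 1 ∧ (e v).val + 1 ≤ n
    have := (e v).isLt
    omega
  · intro u v huv heq hr
    have heq' : (e u).val + 1 = (e v).val + 1 := heq
    exact absurd (e.injective (Fin.ext (by omega))) huv
  · refine ⟨e.symm ⟨n - 1, by omega⟩, ?_⟩
    show (e (e.symm ⟨n - 1, by omega⟩)).val + 1 = n
    rw [Equiv.apply_symm_apply]
    show n - 1 + 1 = n
    omega
  · intro v j hj1 hjlt
    have hjlt' : j < (e v).val + 1 := hjlt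
    have hvlt := (e v).isLt
    have hjn : j - 1 < n := by omega
    refine ⟨e.symm ⟨j - 1, hjn⟩, ?_, hG _ v, ?_⟩
    · show (e (e.symm ⟨j - 1, hjn⟩)).val + 1 = j
      rw [Equiv.apply_symm_apply]
      show j - 1 + 1 = j
      omega
    · rcases Nat.eq_or_lt_of_le hj1 with h1 | h2
      · -- j = 1 : the witness is x1
        have hx1 : e.symm ⟨j - 1, hjn⟩ = x1 := by
          apply e.injective
          rw [Equiv.apply_symm_apply, hex1]
          exact Fin.ext (show j - 1 = 0 by omega)
        rw [hx1]
        calc G.dist x1 v ≤ 1 := hd1 v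
        _ ≤ j := hj1
      · -- j ≥ 2
        have hu1 : G.dist (e.symm ⟨j - 1, hjn⟩) x1 ≤ 1 := by
          rw [SimpleGraph.dist_comm]; exact hd1 _
        have hv1 : G.dist x1 v ≤ 1 := hd1 v
        calc G.dist (e.symm ⟨j - 1, hjn⟩) v
            ≤ G.dist (e.symm ⟨j - 1, hjn⟩) x1 + G.dist x1 v := hG.dist_triangle
        _ ≤ j := by omega

end AuxColoring


section AuxColoring2

variable {V : Type*} [Fintype V] [DecidableEq V] {G : SimpleGraph V} {x y u v w : V}

lemma aux_greedy_card_dom (hG : G.Connected) {c : V → ℕ}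
    (h : IsGreedyPackingColoring G (Fintype.card V) c) :
    ∃ x1 : V, ∀ v, v ≠ x1 → G.Adj x1 v := by
  have hne : Nonempty V := hG.nonempty
  have hn : 1 ≤ Fintype.card V := Fintype.card_pos
  obtain ⟨hpack, ⟨t, ht⟩, hgr⟩ := h
  have hf : ∀ j : Fin (Fintype.card V), ∃ u, c u = j.val + 1 := by
    intro j
    rcases Nat.lt_or_ge (j.val + 1) (Fintype.card V) with hlt | hge
    · obtain ⟨u, hu, -, -⟩ := hgr t (j.val + 1) (by omega) (by omega)
      exact ⟨u, hu⟩
    · have := j.isLt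
      exact ⟨t, by omega⟩
  choose F hF using hf
  have hinj : Function.Injective F := by
    intro a b hab
    have h1 := hF a
    rw [hab, hF b] at h1
    exact Fin.ext (by omega)
  have hsurj : Function.Surjective F :=
    (Fintype.bijective_iff_injective_and_card F).mpr ⟨hinj, by simp⟩ |>.2
  set x1 := F ⟨0, by omega⟩ with hx1def
  have hcx1 : c x1 = 1 := by
    have := hF ⟨0, by omega⟩
    exact this
  refine ⟨x1, fun v hv => ?_⟩
  have hcv : 2 ≤ c v := by
    obtain ⟨j, hj⟩ := hsurj v
    have h1 := hF j
    rw [hj] at h1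
    rcases Nat.eq_zero_or_pos j.val with h0 | hp
    · exfalso; apply hv; rw [hx1def, ← hj]; congr 1; exact Fin.ext (show j.val = 0 from h0)
    · omega
  obtain ⟨u2, hu2c, hu2r, hu2d⟩ := hgr v 1 le_rfl (by omega)
  have hu2 : u2 = x1 := by
    obtain ⟨j, hj⟩ := hsurj u2
    have h1 := hF j
    rw [hj] at h1
    rw [hx1def, ← hj]
    congr 1
    exact Fin.ext (show j.val = 0 by omega)
  subst hu2
  have hneq : x1 ≠ v := fun h => by rw [h] at hcx1; omega
  exact (aux_adj_of_dist_le_one hu2r hneq hu2d)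

end AuxColoring2


section AuxConstruct

variable {V : Type*} [Fintype V] [DecidableEq V] {G : SimpleGraph V}

/-- Auxiliary coloring used to build a greedy packing `(n-1)`-coloring. -/
noncomputable def auxCol (x y v2 v3 : V) [DecidableEq V]
    (g : {v : V // v ∉ ({x, y, v2, v3} : Finset V)} → ℕ) (v : V) : ℕ :=
  if v = x ∨ v = y then 1
  else if v = v2 then 2
  else if v = v3 then 3
  else if hv : v ∈ ({x, y, v2, v3} : Finset V) then 1
  else 4 + g ⟨v, hv⟩

lemma auxCol_char (x y v2 v3 : V)
    (g : {v : V // v ∉ ({x, y, v2, v3} : Finset V)} → ℕ) (v : V) :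
    ((v = x ∨ v = y) ∧ auxCol x y v2 v3 g v = 1) ∨
    (v = v2 ∧ auxCol x y v2 v3 g v = 2) ∨
    (v = v3 ∧ auxCol x y v2 v3 g v = 3) ∨
    (∃ hv : v ∉ ({x, y, v2, v3} : Finset V), auxCol x y v2 v3 g v = 4 + g ⟨v, hv⟩) := by
  unfold auxCol
  by_cases h1 : v = x ∨ v = y
  · exact Or.inl ⟨h1, if_pos h1⟩
  by_cases h2 : v = v2
  · exact Or.inr (Or.inl ⟨h2, by rw [if_neg h1, if_pos h2]⟩)
  by_cases h3 : v = v3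
  · exact Or.inr (Or.inr (Or.inl ⟨h3, by rw [if_neg h1, if_neg h2, if_pos h3]⟩))
  have hv : v ∉ ({x, y, v2, v3} : Finset V) := by
    simp only [Finset.mem_insert, Finset.mem_singleton]
    push_neg
    exact ⟨fun h => h1 (Or.inl h), fun h => h1 (Or.inr h), h2, h3⟩
  exact Or.inr (Or.inr (Or.inr ⟨hv, by rw [if_neg h1, if_neg h2, if_neg h3, dif_neg hv]⟩))

lemma auxCol_x (x y v2 v3 : V) (g : {v : V // v ∉ ({x, y, v2, v3} : Finset V)} → ℕ) :
    auxCol x y v2 v3 g x = 1 := by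
  unfold auxCol; rw [if_pos (Or.inl rfl)]

lemma auxCol_y (x y v2 v3 : V) (g : {v : V // v ∉ ({x, y, v2, v3} : Finset V)} → ℕ) :
    auxCol x y v2 v3 g y = 1 := by
  unfold auxCol; rw [if_pos (Or.inr rfl)]

lemma auxCol_v2 {x y : V} (v2 v3 : V) (h2x : v2 ≠ x) (h2y : v2 ≠ y)
    (g : {v : V // v ∉ ({x, y, v2, v3} : Finset V)} → ℕ) :
    auxCol x y v2 v3 g v2 = 2 := by
  unfold auxCol
  rw [if_neg (by push_neg; exact ⟨h2x, h2y⟩), if_pos rfl]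

lemma auxCol_v3 {x y v2 : V} (v3 : V) (h3x : v3 ≠ x) (h3y : v3 ≠ y) (h32 : v3 ≠ v2)
    (g : {v : V // v ∉ ({x, y, v2, v3} : Finset V)} → ℕ) :
    auxCol x y v2 v3 g v3 = 3 := by
  unfold auxCol
  rw [if_neg (by push_neg; exact ⟨h3x, h3y⟩), if_neg h32, if_pos rfl]

lemma auxCol_tail {x y v2 v3 : V} {v : V} (hv : v ∉ ({x, y, v2, v3} : Finset V))
    (g : {v : V // v ∉ ({x, y, v2, v3} : Finset V)} → ℕ) :
    auxCol x y v2 v3 g v = 4 + g ⟨v, hv⟩ := by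
  rcases auxCol_char x y v2 v3 g v with ⟨h, -⟩ | ⟨h, -⟩ | ⟨h, -⟩ | ⟨hv', he⟩
  · exfalso; apply hv; rcases h with rfl | rfl <;> simp
  · exfalso; apply hv; rw [h]; simp
  · exfalso; apply hv; rw [h]; simp
  · exact he

lemma aux_construct (hG : G.Connected) {x y v2 v3 : V}
    (hxy : x ≠ y) (hnadj : ¬ G.Adj x y)
    (hdom : ∀ u, u ≠ x → u ≠ y → (G.Adj x u ∨ G.Adj y u))
    (h2x : v2 ≠ x) (h2y : v2 ≠ y) (h3x : v3 ≠ x) (h3y : v3 ≠ y) (h32 : v3 ≠ v2)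
    (hv2 : ∀ u, u ≠ x → u ≠ y → u ≠ v2 → G.dist v2 u ≤ 2)
    (hv3 : ∀ u, u ≠ x → u ≠ y → u ≠ v2 → u ≠ v3 → G.dist v3 u ≤ 3)
    (hdiam : ∀ u v : V, G.dist u v ≤ 4) :
    ∃ c, IsGreedyPackingColoring G (Fintype.card V - 1) c := by
  classical
  set n := Fintype.card V with hn
  have hcard4 : ({x, y, v2, v3} : Finset V).card = 4 := by
    rw [Finset.card_insert_of_notMem (by
      simp only [Finset.mem_insert, Finset.mem_singleton]; push_neg
      exact ⟨hxy, Ne.symm h2x, Ne.symm h3x⟩)]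
    rw [Finset.card_insert_of_notMem (by
      simp only [Finset.mem_insert, Finset.mem_singleton]; push_neg
      exact ⟨Ne.symm h2y, Ne.symm h3y⟩)]
    rw [Finset.card_insert_of_notMem (by
      simp only [Finset.mem_singleton]; exact Ne.symm h32)]
    simp
  have hn4 : 4 ≤ n := by
    calc 4 = ({x, y, v2, v3} : Finset V).card := hcard4.symm
    _ ≤ n := Finset.card_le_univ _
  have hTcard : Fintype.card {v : V // v ∉ ({x, y, v2, v3} : Finset V)} = n - 4 := by
    rw [Fintype.card_subtype_compl, Fintype.card_coe, hcard4]
  let e : {v : V // v ∉ ({x, y, v2, v3} : Finset V)} ≃ Fin (n - 4) :=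
    Fintype.equivFinOfCardEq hTcard
  set g : {v : V // v ∉ ({x, y, v2, v3} : Finset V)} → ℕ := fun t => (e t).val with hg
  set c : V → ℕ := auxCol x y v2 v3 g with hc
  have hcx : c x = 1 := auxCol_x x y v2 v3 g
  have hcy : c y = 1 := auxCol_y x y v2 v3 g
  have hc2 : c v2 = 2 := auxCol_v2 v2 v3 h2x h2y g
  have hc3 : c v3 = 3 := auxCol_v3 v3 h3x h3y h32 g
  have hchar := auxCol_char x y v2 v3 g
  have hnm : ∀ w : V, w ∉ ({x, y, v2, v3} : Finset V) → w ≠ x ∧ w ≠ y ∧ w ≠ v2 ∧ w ≠ v3 := by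
    intro w hw
    simp only [Finset.mem_insert, Finset.mem_singleton] at hw
    push_neg at hw
    exact hw
  have hbounds : ∀ v : V, 1 ≤ c v ∧ c v ≤ n - 1 := by
    intro v
    rcases hchar v with ⟨-, h⟩ | ⟨-, h⟩ | ⟨-, h⟩ | ⟨hv, h⟩ <;> rw [hc] at *
    · omega
    · omega
    · omega
    · have := (e ⟨v, hv⟩).isLt
      have hgv : g ⟨v, hv⟩ < n - 4 := this
      omega
  have hge2 : ∀ v : V, 2 ≤ c v → v ≠ x ∧ v ≠ y := by
    intro v h2
    constructor
    · rintro rfl; omega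
    · rintro rfl; omega
  have hge3 : ∀ v : V, 3 ≤ c v → v ≠ x ∧ v ≠ y ∧ v ≠ v2 := by
    intro v h3
    refine ⟨(hge2 v (by omega)).1, (hge2 v (by omega)).2, ?_⟩
    rintro rfl; omega
  have hge4 : ∀ v : V, 4 ≤ c v → v ∉ ({x, y, v2, v3} : Finset V) := by
    intro v h4
    rcases hchar v with ⟨-, h⟩ | ⟨-, h⟩ | ⟨-, h⟩ | ⟨hv, h⟩ <;> rw [← hc] at h
    · omega
    · omega
    · omega
    · exact hv
  refine ⟨c, ⟨fun v => hbounds v, ?_⟩, ?_, ?_⟩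
  · -- packing condition
    intro a b hab heq hr
    rcases hchar a with ⟨ha, hca⟩ | ⟨ha, hca⟩ | ⟨ha, hca⟩ | ⟨ha, hca⟩ <;>
      rcases hchar b with ⟨hb, hcb⟩ | ⟨hb, hcb⟩ | ⟨hb, hcb⟩ | ⟨hb, hcb⟩ <;>
        rw [← hc] at hca hcb
    · -- both color 1
      rw [hca]
      have hd2 : 2 ≤ G.dist x y := aux_dist_ge_two hG hxy hnadj
      rcases ha with rfl | rfl <;> rcases hb with rfl | rfl
      · exact absurd rfl hab
      · omega
      · rw [SimpleGraph.dist_comm]; omega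
      · exact absurd rfl hab
    all_goals try (exfalso; omega)
    · exfalso; rw [ha, hb] at hab; exact hab rfl
    · exfalso; rw [ha, hb] at hab; exact hab rfl
    · exfalso
      apply hab
      have hgeq : g ⟨a, ha⟩ = g ⟨b, hb⟩ := by omega
      have heab := e.injective (Fin.ext hgeq)
      exact congrArg Subtype.val heab
  · -- uses color n - 1
    rcases Nat.eq_or_lt_of_le hn4 with h4 | h5
    · exact ⟨v3, by rw [hc3]; omega⟩
    · have hlt : n - 5 < n - 4 := by omega
      refine ⟨(e.symm ⟨n - 5, hlt⟩).val, ?_⟩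
      have hmem := (e.symm ⟨n - 5, hlt⟩).2
      rw [hc, auxCol_tail hmem g]
      have hgv : g ⟨(e.symm ⟨n - 5, hlt⟩).val, hmem⟩ = n - 5 := by
        show (e (e.symm ⟨n - 5, hlt⟩)).val = n - 5
        rw [Equiv.apply_symm_apply]
      rw [hgv]
      omega
  · -- greedy condition
    intro v j hj1 hjlt
    have hb := hbounds v
    by_cases hj1' : j = 1
    · subst hj1'
      obtain ⟨hvx, hvy⟩ := hge2 v (by omega)
      rcases hdom v hvx hvy with hA | hA
      · exact ⟨x, hcx, hA.reachable, le_of_eq (aux_dist_adj hA)⟩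
      · exact ⟨y, hcy, hA.reachable, le_of_eq (aux_dist_adj hA)⟩
    by_cases hj2 : j = 2
    · subst hj2
      obtain ⟨hvx, hvy, hv2'⟩ := hge3 v (by omega)
      exact ⟨v2, hc2, hG v2 v, hv2 v hvx hvy hv2'⟩
    by_cases hj3 : j = 3
    · subst hj3
      obtain ⟨hvx, hvy, hv2', hv3'⟩ := hnm v (hge4 v (by omega))
      exact ⟨v3, hc3, hG v3 v, hv3 v hvx hvy hv2' hv3'⟩
    · have hj4 : 4 ≤ j := by omega
      have hlt : j - 4 < n - 4 := by omega
      refine ⟨(e.symm ⟨j - 4, hlt⟩).val, ?_, hG _ v, le_trans (hdiam _ v) (by omega)⟩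
      have hmem := (e.symm ⟨j - 4, hlt⟩).2
      rw [hc, auxCol_tail hmem g]
      have hgv : g ⟨(e.symm ⟨j - 4, hlt⟩).val, hmem⟩ = j - 4 := by
        show (e (e.symm ⟨j - 4, hlt⟩)).val = j - 4
        rw [Equiv.apply_symm_apply]
      rw [hgv]
      omega

end AuxConstruct


section AuxForward

variable {V : Type*} [Fintype V] [DecidableEq V] {G : SimpleGraph V}

lemma aux_forward (hG : G.Connected) {c : V → ℕ}
    (hc : IsGreedyPackingColoring G (Fintype.card V - 1) c)
    (hnd : ∀ x1 : V, ∃ u, u ≠ x1 ∧ ¬ G.Adj x1 u) :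
    ∃ x y v2 : V, x ≠ y ∧ ¬ G.Adj x y ∧
      (∀ u, u ≠ x → u ≠ y → (G.Adj x u ∨ G.Adj y u)) ∧
      v2 ≠ x ∧ v2 ≠ y ∧ (∀ u, u ≠ x → u ≠ y → u ≠ v2 → G.dist v2 u ≤ 2) ∧
      ((∃ u, u ≠ x ∧ u ≠ y ∧ u ≠ v2) →
        ∃ v3, v3 ≠ x ∧ v3 ≠ y ∧ v3 ≠ v2 ∧
          ∀ w, w ≠ x → w ≠ y → w ≠ v2 → w ≠ v3 → G.dist v3 w ≤ 3) := by
  classical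
  have hne : Nonempty V := hG.nonempty
  set n := Fintype.card V with hn
  have hn1 : 1 ≤ n := Fintype.card_pos
  obtain ⟨hpack, ⟨t, ht⟩, hgr⟩ := hc
  have hn2 : 2 ≤ n := by
    by_contra hcon
    have hb := (hpack.1 t).1
    have hb2 := (hpack.1 t).2
    omega
  have hf : ∀ j : ℕ, ∃ u, 1 ≤ j → j ≤ n - 1 → c u = j := by
    intro j
    by_cases hj : 1 ≤ j ∧ j ≤ n - 1
    · rcases Nat.eq_or_lt_of_le hj.2 with he | hl
      · exact ⟨t, fun _ _ => by omega⟩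
      · obtain ⟨u, hu, -, -⟩ := hgr t j hj.1 (by omega)
        exact ⟨u, fun _ _ => hu⟩
    · exact ⟨t, fun h1 h2 => absurd ⟨h1, h2⟩ hj⟩
  choose F hF using hf
  by_cases hpair : ∃ a b, a ≠ b ∧ c a = 1 ∧ c b = 1
  swap
  · -- no duplicated color 1: the color-1 vertex dominates, contradiction
    exfalso
    push_neg at hpair
    have hcx1 : c (F 1) = 1 := hF 1 le_rfl (by omega)
    obtain ⟨u', hu'ne, hu'nadj⟩ := hnd (F 1)
    apply hu'nadj
    have hcu' : 2 ≤ c u' := by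
      have h1 := (hpack.1 u').1
      rcases Nat.eq_or_lt_of_le h1 with he | hl
      · exact absurd hcx1 (hpair u' (F 1) hu'ne he.symm)
      · omega
    obtain ⟨u2, hu2c, hu2r, hu2d⟩ := hgr u' 1 le_rfl (by omega)
    have hu2x1 : u2 = F 1 := by
      by_contra hne2
      exact (hpair u2 (F 1) hne2 hu2c) hcx1
    have hne3 : u2 ≠ u' := fun h => by rw [h] at hu2c; omega
    have := aux_adj_of_dist_le_one hu2r hne3 hu2d
    rwa [hu2x1] at this
  obtain ⟨a, b, hab, hca, hcb⟩ := hpair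
  have hreach : G.Reachable a b := hG a b
  have hdab : 1 < G.dist a b := by
    have := hpack.2 a b hab (by omega) hreach
    omega
  have hnadj_ab : ¬ G.Adj a b := fun h => by
    have := aux_dist_adj h
    omega
  -- a third vertex exists
  have hn3 : 3 ≤ n := by
    have hge1ab : 1 ≤ G.dist a b := by omega
    obtain ⟨m, hm, hd⟩ := aux_exists_adj_dist hge1ab
    have hma : m ≠ a := fun h => G.irrefl (h ▸ hm)
    have hmb : m ≠ b := by
      rintro rfl
      have := aux_dist_adj hm
      omega
    have : ({a, b, m} : Finset V).card = 3 := by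
      rw [Finset.card_insert_of_notMem (by
        simp only [Finset.mem_insert, Finset.mem_singleton]; push_neg
        exact ⟨hab, Ne.symm hma⟩)]
      rw [Finset.card_insert_of_notMem (by
        simp only [Finset.mem_singleton]; exact Ne.symm hmb)]
      simp
    calc 3 = ({a, b, m} : Finset V).card := this.symm
    _ ≤ n := Finset.card_le_univ _
  -- the vertices a, b, F 2, ..., F (n-1) exhaust V
  have hFc : ∀ j ∈ Finset.Icc 2 (n - 1), c (F j) = j := fun j hj => by
    rw [Finset.mem_Icc] at hj
    exact hF j (by omega) hj.2
  have hinjF : Set.InjOn F (Finset.Icc 2 (n - 1)) := by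
    intro i hi j hj hij
    have h1 := hFc i hi
    have h2 := hFc j hj
    rw [hij] at h1
    omega
  have hanotin : a ∉ (Finset.Icc 2 (n - 1)).image F := by
    simp only [Finset.mem_image]
    rintro ⟨j, hj, hFj⟩
    have := hFc j hj
    rw [Finset.mem_Icc] at hj
    rw [hFj, hca] at this
    omega
  have hbnotin : b ∉ (Finset.Icc 2 (n - 1)).image F := by
    simp only [Finset.mem_image]
    rintro ⟨j, hj, hFj⟩
    have := hFc j hj
    rw [Finset.mem_Icc] at hj
    rw [hFj, hcb] at this
    omega
  have hcardIm : ((Finset.Icc 2 (n - 1)).image F).card = n - 2 := by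
    rw [Finset.card_image_of_injOn hinjF, Nat.card_Icc]
    omega
  have hTuniv : (insert a (insert b ((Finset.Icc 2 (n - 1)).image F))) = Finset.univ := by
    apply Finset.eq_univ_of_card
    rw [Finset.card_insert_of_notMem (by
      simp only [Finset.mem_insert]
      push_neg
      exact ⟨hab, hanotin⟩)]
    rw [Finset.card_insert_of_notMem hbnotin, hcardIm]
    omega
  have hkey : ∀ v : V, v ≠ a → v ≠ b → (2 ≤ c v ∧ c v ≤ n - 1 ∧ F (c v) = v) := by
    intro v hva hvb
    have hv : v ∈ (insert a (insert b ((Finset.Icc 2 (n - 1)).image F))) := by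
      rw [hTuniv]; exact Finset.mem_univ v
    simp only [Finset.mem_insert, Finset.mem_image] at hv
    rcases hv with rfl | rfl | ⟨j, hj, hFj⟩
    · exact absurd rfl hva
    · exact absurd rfl hvb
    · have hcj := hFc j hj
      rw [Finset.mem_Icc] at hj
      rw [hFj] at hcj
      refine ⟨by omega, by omega, ?_⟩
      rw [hcj, hFj]
  have hdom : ∀ u, u ≠ a → u ≠ b → (G.Adj a u ∨ G.Adj b u) := by
    intro u hua hub
    obtain ⟨h2, -, -⟩ := hkey u hua hub
    obtain ⟨u1, hu1c, hu1r, hu1d⟩ := hgr u 1 le_rfl (by omega)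
    have hu1ne : u1 ≠ u := fun h => by rw [h] at hu1c; omega
    have hu1ab : u1 = a ∨ u1 = b := by
      by_contra hcon
      push_neg at hcon
      obtain ⟨h2', -, -⟩ := hkey u1 hcon.1 hcon.2
      omega
    have hadj := aux_adj_of_dist_le_one hu1r hu1ne hu1d
    rcases hu1ab with rfl | rfl
    · exact Or.inl hadj
    · exact Or.inr hadj
  -- v2 := F 2
  have hcF2 : c (F 2) = 2 := hF 2 (by omega) (by omega)
  have h2a : F 2 ≠ a := fun h => by rw [h, hca] at hcF2; omega
  have h2b : F 2 ≠ b := fun h => by rw [h, hcb] at hcF2; omega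
  have hv2prop : ∀ u, u ≠ a → u ≠ b → u ≠ F 2 → G.dist (F 2) u ≤ 2 := by
    intro u hua hub hu2
    obtain ⟨h2, hle, hFcv⟩ := hkey u hua hub
    have h3 : 3 ≤ c u := by
      rcases Nat.eq_or_lt_of_le h2 with he | hl
      · exfalso; apply hu2; rw [← hFcv, ← he]
      · omega
    obtain ⟨w, hwc, hwr, hwd⟩ := hgr u 2 (by omega) (by omega)
    have hwa : w ≠ a := fun h => by rw [h, hca] at hwc; omega
    have hwb : w ≠ b := fun h => by rw [h, hcb] at hwc; omega
    obtain ⟨-, -, hFw⟩ := hkey w hwa hwb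
    rw [hwc] at hFw
    rwa [← hFw] at hwd
  refine ⟨a, b, F 2, hab, hnadj_ab, hdom, h2a, h2b, hv2prop, ?_⟩
  rintro ⟨u0, hu0a, hu0b, hu02⟩
  obtain ⟨h2u0, hleu0, hFu0⟩ := hkey u0 hu0a hu0b
  have h3u0 : 3 ≤ c u0 := by
    rcases Nat.eq_or_lt_of_le h2u0 with he | hl
    · exfalso; apply hu02; rw [← hFu0, ← he]
    · omega
  have h3n : 3 ≤ n - 1 := by omega
  have hcF3 : c (F 3) = 3 := hF 3 (by omega) h3n
  have h3a : F 3 ≠ a := fun h => by rw [h, hca] at hcF3; omega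
  have h3b : F 3 ≠ b := fun h => by rw [h, hcb] at hcF3; omega
  have h32 : F 3 ≠ F 2 := fun h => by rw [h, hcF2] at hcF3; omega
  refine ⟨F 3, h3a, h3b, h32, ?_⟩
  intro w hwa hwb hw2 hw3
  obtain ⟨h2w, hlew, hFw⟩ := hkey w hwa hwb
  have h4w : 4 ≤ c w := by
    rcases Nat.eq_or_lt_of_le h2w with he | hl
    · exfalso; apply hw2; rw [← hFw, ← he]
    rcases Nat.eq_or_lt_of_le hl with he2 | hl2
    · exfalso; apply hw3; rw [← hFw, ← he2]
    · omega
  obtain ⟨w3, hw3c, hw3r, hw3d⟩ := hgr w 3 (by omega) (by omega)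
  have hw3a : w3 ≠ a := fun h => by rw [h, hca] at hw3c; omega
  have hw3b : w3 ≠ b := fun h => by rw [h, hcb] at hw3c; omega
  obtain ⟨-, -, hFw3⟩ := hkey w3 hw3a hw3b
  rw [hw3c] at hFw3
  rwa [← hFw3] at hw3d

end AuxForward


/-- A connected graph `G` on `n` vertices has `Γρ(G) = n - 1` iff
(i) `i(G) = 2`; (ii) `diam(G) ≤ 4`; (iii) if `rad(G) = 3` then there exist a maximal
independent set `{x,y}` with `d(x,y) = 3` and `w ∈ N(x)` with `d(w,z) ≤ 2` for all
`z ∈ N(y)`; (iv) if `rad(G) = 2` and `diam(G) = 4` then there exist a maximal independent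
set `A` of cardinality 2 and distinct `w, z ∉ A` with `ecc(w) = 2` and `ecc(z) ≤ 3`. -/
theorem grundyPackingChromaticNumber_eq_card_sub_one_iff {V : Type*} [Fintype V]
    [DecidableEq V] (G : SimpleGraph V) (hG : G.Connected) :
    grundyPackingChromaticNumber G = Fintype.card V - 1 ↔
    (indepDomNum G = 2 ∧
     graphDiam G ≤ 4 ∧
     (graphRadius G = 3 →
        ∃ x y : V, x ≠ y ∧ IsMaxIndepFinset G {x, y} ∧ G.dist x y = 3 ∧
          ∃ w : V, G.Adj x w ∧ ∀ z : V, G.Adj y z → G.dist w z ≤ 2) ∧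
     (graphRadius G = 2 ∧ graphDiam G = 4 →
        ∃ A : Finset V, IsMaxIndepFinset G A ∧ A.card = 2 ∧
          ∃ w z : V, w ≠ z ∧ w ∉ A ∧ z ∉ A ∧ _root_.eccent G w = 2 ∧ _root_.eccent G z ≤ 3)) := by
  classical
  have hne : Nonempty V := hG.nonempty
  set n := Fintype.card V with hn
  have hn1 : 1 ≤ n := Fintype.card_pos
  have hgr : grundyPackingChromaticNumber G
      = sSup {k | ∃ c : V → ℕ, IsGreedyPackingColoring G k c} := rfl
  set S : Set ℕ := {k | ∃ c : V → ℕ, IsGreedyPackingColoring G k c} with hS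
  have hbdd : BddAbove S := ⟨n, fun k hk => by
    obtain ⟨c, hc⟩ := hk; exact aux_greedy_le_card hc⟩
  constructor
  · intro hmain
    rw [hgr] at hmain
    have hnd : ∀ x1 : V, ∃ u, u ≠ x1 ∧ ¬ G.Adj x1 u := by
      intro x1
      by_contra hcon
      push_neg at hcon
      obtain ⟨c0, hc0⟩ := aux_dom_greedy hG hcon
      have hnS : n ∈ S := ⟨c0, hc0⟩
      have := le_csSup hbdd hnS
      omega
    have hn2 : 2 ≤ n := by
      obtain ⟨v0⟩ := hne
      obtain ⟨u, hu, -⟩ := hnd v0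
      have : ({u, v0} : Finset V).card = 2 := Finset.card_pair hu
      calc 2 = ({u, v0} : Finset V).card := this.symm
      _ ≤ n := Finset.card_le_univ _
    have hSne : S.Nonempty := by
      by_contra hcon
      rw [Set.not_nonempty_iff_eq_empty] at hcon
      rw [hcon, csSup_empty] at hmain
      have h0 : (⊥ : ℕ) = 0 := rfl
      omega
    have hmemS : n - 1 ∈ S := hmain ▸ Nat.sSup_mem hSne hbdd
    obtain ⟨c, hc⟩ := hmemS
    obtain ⟨x, y, v2, hxy, hnadj, hdom, h2x, h2y, hv2, hv3gen⟩ := aux_forward hG hc hnd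
    have hd2 : 2 ≤ G.dist x y := aux_dist_ge_two hG hxy hnadj
    have hd3 : G.dist x y ≤ 3 := aux_pair_dist_le_three hG hxy hnadj hdom
    have hmaxpair : IsMaxIndepFinset G {x, y} := aux_maxind_pair_of hnadj hdom
    have hv2' : ∀ u, u ≠ x → u ≠ y → G.dist v2 u ≤ 2 := by
      intro u h1 h2
      by_cases h3 : u = v2
      · rw [h3, SimpleGraph.dist_self]; omega
      · exact hv2 u h1 h2 h3
    have hdxw : ∀ w, w ≠ x → w ≠ y → G.dist x w ≤ 4 := by
      intro w h1 h2
      rcases hdom w h1 h2 with h | h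
      · rw [aux_dist_adj h]; omega
      · calc G.dist x w ≤ G.dist x y + G.dist y w := hG.dist_triangle
        _ ≤ 4 := by rw [aux_dist_adj h]; omega
    have hdyw : ∀ w, w ≠ x → w ≠ y → G.dist y w ≤ 4 := by
      intro w h1 h2
      rcases hdom w h1 h2 with h | h
      · calc G.dist y w ≤ G.dist y x + G.dist x w := hG.dist_triangle
        _ ≤ 4 := by rw [SimpleGraph.dist_comm (G := G) (u := y) (v := x), aux_dist_adj h]; omega
      · rw [aux_dist_adj h]; omega
    have hpt : ∀ u v : V, G.dist u v ≤ 4 := by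
      intro u v
      by_cases hux : u = x
      · rw [hux]
        by_cases hvx : v = x
        · rw [hvx, SimpleGraph.dist_self]; omega
        by_cases hvy : v = y
        · rw [hvy]; omega
        · exact hdxw v hvx hvy
      by_cases huy : u = y
      · rw [huy]
        by_cases hvx : v = x
        · rw [hvx, SimpleGraph.dist_comm]; omega
        by_cases hvy : v = y
        · rw [hvy, SimpleGraph.dist_self]; omega
        · exact hdyw v hvx hvy
      by_cases hvx : v = x
      · rw [hvx, SimpleGraph.dist_comm]; exact hdxw u hux huy
      by_cases hvy : v = y
      · rw [hvy, SimpleGraph.dist_comm]; exact hdyw u hux huy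
      · calc G.dist u v ≤ G.dist u v2 + G.dist v2 v := hG.dist_triangle
        _ ≤ 4 := by
          have h1 : G.dist u v2 ≤ 2 := by rw [SimpleGraph.dist_comm]; exact hv2' u hux huy
          have h2 := hv2' v hvx hvy
          omega
    refine ⟨?_, aux_graphDiam_le hpt, ?_, ?_⟩
    · -- (i) indepDomNum = 2
      have hidef : indepDomNum G
          = sInf {m | ∃ s : Finset V, IsMaxIndepFinset G s ∧ s.card = m} := rfl
      have h2mem : 2 ∈ {m | ∃ s : Finset V, IsMaxIndepFinset G s ∧ s.card = m} :=
        ⟨{x, y}, hmaxpair, Finset.card_pair hxy⟩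
      have hle : indepDomNum G ≤ 2 := by rw [hidef]; exact Nat.sInf_le h2mem
      obtain ⟨s, hs, hscard⟩ := Nat.sInf_mem (⟨2, h2mem⟩ :
        {m | ∃ s : Finset V, IsMaxIndepFinset G s ∧ s.card = m}.Nonempty)
      rw [← hidef] at hscard
      have hski0 : indepDomNum G ≠ 0 := by
        intro h0
        rw [h0, Finset.card_eq_zero] at hscard
        subst hscard
        obtain ⟨v0⟩ := hne
        have hsingle : IsIndepFinset G {v0} := by
          intro a ha b hb
          simp only [Finset.mem_singleton] at ha hb
          subst ha; subst hb
          exact fun hadj => G.irrefl hadj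
        have := hs.2 {v0} hsingle (Finset.empty_subset _)
        exact Finset.singleton_ne_empty v0 this.symm
      have hski1 : indepDomNum G ≠ 1 := by
        intro h1
        rw [h1, Finset.card_eq_one] at hscard
        obtain ⟨v0, hv0⟩ := hscard
        subst hv0
        obtain ⟨u, hu, hnadju⟩ := hnd v0
        apply hnadju
        by_contra hcon
        have hins : IsIndepFinset G {v0, u} := by
          intro p hp q hq
          simp only [Finset.mem_insert, Finset.mem_singleton] at hp hq
          rcases hp with rfl | rfl <;> rcases hq with rfl | rfl
          · exact fun hadj => G.irrefl hadj
          · exact hcon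
          · exact fun hadj => hcon hadj.symm
          · exact fun hadj => G.irrefl hadj
        have heq := hs.2 {v0, u} hins (by
          intro z hz
          simp only [Finset.mem_singleton] at hz
          subst hz
          simp)
        have : u ∈ ({v0} : Finset V) := heq ▸ (by simp : u ∈ ({v0, u} : Finset V))
        simp only [Finset.mem_singleton] at this
        exact hu this
      omega
    · -- (iii)
      intro hrad3
      have hdxy3 : G.dist x y = 3 := by
        rcases (by omega : G.dist x y = 2 ∨ G.dist x y = 3) with h2' | h3'
        · exfalso
          obtain ⟨m, hm1, hm2⟩ := aux_common_neighbor h2'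
          have heccm : _root_.eccent G m ≤ 2 := by
            apply aux_eccent_le
            intro u
            by_cases hux : u = x
            · rw [hux, SimpleGraph.dist_comm, aux_dist_adj hm1]; omega
            by_cases huy : u = y
            · rw [huy, aux_dist_adj hm2]; omega
            by_cases hum : u = m
            · rw [hum, SimpleGraph.dist_self]; omega
            rcases hdom u hux huy with h | h
            · calc G.dist m u ≤ G.dist m x + G.dist x u := hG.dist_triangle
              _ ≤ 2 := by
                  rw [SimpleGraph.dist_comm (G := G) (u := m) (v := x), aux_dist_adj hm1, aux_dist_adj h]
            · calc G.dist m u ≤ G.dist m y + G.dist y u := hG.dist_triangle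
              _ ≤ 2 := by rw [aux_dist_adj hm2, aux_dist_adj h]
          have := aux_graphRadius_le_eccent (G := G) m
          omega
        · exact h3'
      rcases hdom v2 h2x h2y with hA | hA
      · refine ⟨x, y, hxy, hmaxpair, hdxy3, v2, hA, ?_⟩
        intro z hz
        have hzx : z ≠ x := by rintro rfl; exact hnadj hz.symm
        have hzy : z ≠ y := (G.ne_of_adj hz).symm
        have hzv2 : z ≠ v2 := by
          rintro rfl
          have : G.dist x y ≤ 2 := by
            calc G.dist x y ≤ G.dist x z + G.dist z y := hG.dist_triangle
            _ ≤ 2 := by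
                rw [aux_dist_adj hA, SimpleGraph.dist_comm (G := G) (u := z) (v := y), aux_dist_adj hz]
          omega
        exact hv2 z hzx hzy hzv2
      · refine ⟨y, x, hxy.symm, by rw [Finset.pair_comm]; exact hmaxpair,
          by rw [SimpleGraph.dist_comm]; exact hdxy3, v2, hA, ?_⟩
        intro z hz
        have hzy : z ≠ y := by rintro rfl; exact hnadj hz
        have hzx : z ≠ x := (G.ne_of_adj hz).symm
        have hzv2 : z ≠ v2 := by
          rintro rfl
          have : G.dist x y ≤ 2 := by
            calc G.dist x y ≤ G.dist x z + G.dist z y := hG.dist_triangle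
            _ ≤ 2 := by
                rw [aux_dist_adj hz, SimpleGraph.dist_comm (G := G) (u := z) (v := y), aux_dist_adj hA]
          omega
        exact hv2 z hzx hzy hzv2
    · -- (iv)
      rintro ⟨hrad2, hdiam4⟩
      rcases (by omega : G.dist x y = 2 ∨ G.dist x y = 3) with h2' | h3'
      · obtain ⟨m, hm1, hm2⟩ := aux_common_neighbor h2'
        have hdmx : G.dist m x = 1 := by
          rw [SimpleGraph.dist_comm]; exact aux_dist_adj hm1
        have hmall : ∀ u, G.dist m u ≤ 2 := by
          intro u
          by_cases hux : u = x
          · rw [hux]; omega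
          by_cases huy : u = y
          · rw [huy, aux_dist_adj hm2]; omega
          by_cases hum : u = m
          · rw [hum, SimpleGraph.dist_self]; omega
          rcases hdom u hux huy with h | h
          · calc G.dist m u ≤ G.dist m x + G.dist x u := hG.dist_triangle
            _ ≤ 2 := by rw [hdmx, aux_dist_adj h]
          · calc G.dist m u ≤ G.dist m y + G.dist y u := hG.dist_triangle
            _ ≤ 2 := by rw [aux_dist_adj hm2, aux_dist_adj h]
        have heccm : _root_.eccent G m = 2 := by
          refine le_antisymm (aux_eccent_le hmall) ?_
          rw [← hrad2]
          exact aux_graphRadius_le_eccent m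
        have hmx : m ≠ x := fun h => G.irrefl (h ▸ hm1)
        have hmy : m ≠ y := fun h => G.irrefl (h ▸ hm2)
        by_cases hveq : v2 = m
        · obtain ⟨p, q, hpq⟩ := aux_exists_diam_pair G
          rw [hdiam4] at hpq
          have heccx : ∀ u, G.dist x u ≤ 3 := by
            intro u
            calc G.dist x u ≤ G.dist x m + G.dist m u := hG.dist_triangle
            _ ≤ 3 := by
                have := hmall u
                rw [aux_dist_adj hm1]
                omega
          have heccy : ∀ u, G.dist y u ≤ 3 := by
            intro u
            calc G.dist y u ≤ G.dist y m + G.dist m u := hG.dist_triangle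
            _ ≤ 3 := by
                have h1 : G.dist y m = 1 := by
                  rw [SimpleGraph.dist_comm]; exact aux_dist_adj hm2
                have := hmall u
                omega
          have hpx : p ≠ x := by rintro rfl; have := heccx q; omega
          have hpy : p ≠ y := by rintro rfl; have := heccy q; omega
          have hpv2 : p ≠ v2 := by
            rintro rfl
            rw [hveq] at hpq
            have := hmall q
            omega
          obtain ⟨v3, h3x, h3y, h32, hv3p⟩ := hv3gen ⟨p, hpx, hpy, hpv2⟩
          have hd3m : G.dist v3 m ≤ 2 := by
            rw [SimpleGraph.dist_comm, ← hveq]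
            exact hv2 v3 h3x h3y h32
          have heccv3 : _root_.eccent G v3 ≤ 3 := by
            apply aux_eccent_le
            intro u
            by_cases hux : u = x
            · rw [hux]
              calc G.dist v3 x ≤ G.dist v3 m + G.dist m x := hG.dist_triangle
              _ ≤ 3 := by omega
            by_cases huy : u = y
            · rw [huy]
              calc G.dist v3 y ≤ G.dist v3 m + G.dist m y := hG.dist_triangle
              _ ≤ 3 := by rw [aux_dist_adj hm2]; omega
            by_cases huv2 : u = v2
            · rw [huv2, SimpleGraph.dist_comm]
              have := hv2 v3 h3x h3y h32
              omega
            by_cases huv3 : u = v3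
            · rw [huv3, SimpleGraph.dist_self]; omega
            · exact hv3p u hux huy huv2 huv3
          refine ⟨{x, y}, hmaxpair, Finset.card_pair hxy, m, v3, ?_, ?_, ?_, heccm, heccv3⟩
          · rw [← hveq]; exact fun h => h32 h.symm
          · simp only [Finset.mem_insert, Finset.mem_singleton]
            push_neg
            exact ⟨hmx, hmy⟩
          · simp only [Finset.mem_insert, Finset.mem_singleton]
            push_neg
            exact ⟨h3x, h3y⟩
        · have hmv2 : m ≠ v2 := fun h => hveq h.symm
          have hd2m : G.dist v2 m ≤ 2 := hv2 m hmx hmy hmv2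
          have heccv2 : _root_.eccent G v2 ≤ 3 := by
            apply aux_eccent_le
            intro u
            by_cases hux : u = x
            · rw [hux]
              calc G.dist v2 x ≤ G.dist v2 m + G.dist m x := hG.dist_triangle
              _ ≤ 3 := by omega
            by_cases huy : u = y
            · rw [huy]
              calc G.dist v2 y ≤ G.dist v2 m + G.dist m y := hG.dist_triangle
              _ ≤ 3 := by rw [aux_dist_adj hm2]; omega
            by_cases huv2 : u = v2
            · rw [huv2, SimpleGraph.dist_self]; omega
            · have := hv2 u hux huy huv2
              omega
          refine ⟨{x, y}, hmaxpair, Finset.card_pair hxy, m, v2, hmv2, ?_, ?_, heccm, heccv2⟩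
          · simp only [Finset.mem_insert, Finset.mem_singleton]
            push_neg
            exact ⟨hmx, hmy⟩
          · simp only [Finset.mem_insert, Finset.mem_singleton]
            push_neg
            exact ⟨h2x, h2y⟩
      · obtain ⟨m0, hm0⟩ := aux_exists_central G
        rw [hrad2] at hm0
        have hm0all : ∀ u, G.dist m0 u ≤ 2 := fun u => hm0 ▸ aux_dist_le_eccent (G := G) m0 u
        have hm0x : m0 ≠ x := by rintro rfl; have := hm0all y; omega
        have hm0y : m0 ≠ y := by
          rintro rfl
          have := hm0all x
          rw [SimpleGraph.dist_comm] at this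
          omega
        obtain ⟨t, ht1, htx, hty⟩ := aux_neighbor_outside hG hnadj h3' hm0all
        have hecct : _root_.eccent G t ≤ 3 := by
          apply aux_eccent_le
          intro u
          calc G.dist t u ≤ G.dist t m0 + G.dist m0 u := hG.dist_triangle
          _ ≤ 3 := by
              have h1 : G.dist t m0 = 1 := by
                rw [SimpleGraph.dist_comm]; exact aux_dist_adj ht1
              have := hm0all u
              omega
        refine ⟨{x, y}, hmaxpair, Finset.card_pair hxy, m0, t, G.ne_of_adj ht1, ?_, ?_,
          hm0, hecct⟩
        · simp only [Finset.mem_insert, Finset.mem_singleton]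
          push_neg
          exact ⟨hm0x, hm0y⟩
        · simp only [Finset.mem_insert, Finset.mem_singleton]
          push_neg
          exact ⟨htx, hty⟩
  · rintro ⟨hi, hdiam, hiii, hiv⟩
    rw [hgr]
    have hnd : ∀ v : V, ∃ u, u ≠ v ∧ ¬ G.Adj v u := aux_not_dom hi
    have hidef : indepDomNum G
        = sInf {m | ∃ s : Finset V, IsMaxIndepFinset G s ∧ s.card = m} := rfl
    have hsetne : {m | ∃ s : Finset V, IsMaxIndepFinset G s ∧ s.card = m}.Nonempty := by
      by_contra hcon
      rw [Set.not_nonempty_iff_eq_empty] at hcon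
      rw [hidef, hcon, Nat.sInf_empty] at hi
      omega
    have hmem2 := Nat.sInf_mem hsetne
    rw [← hidef, hi] at hmem2
    obtain ⟨s0, hs0, hs0card⟩ := hmem2
    obtain ⟨x0, y0, hxy0, hs0eq⟩ := Finset.card_eq_two.mp hs0card
    obtain ⟨hnadj0, hdom0⟩ := aux_maxind_pair hxy0 (hs0eq ▸ hs0)
    have hd0ge : 2 ≤ G.dist x0 y0 := aux_dist_ge_two hG hxy0 hnadj0
    have hd0le : G.dist x0 y0 ≤ 3 := aux_pair_dist_le_three hG hxy0 hnadj0 hdom0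
    have hdiam' : ∀ u v : V, G.dist u v ≤ 4 :=
      fun u v => le_trans (aux_dist_le_graphDiam u v) hdiam
    have hrge2 : 2 ≤ graphRadius G := by
      by_contra hcon
      push_neg at hcon
      obtain ⟨m, hm⟩ := aux_exists_central G
      obtain ⟨u, hu, hnadju⟩ := hnd m
      apply hnadju
      refine aux_adj_of_dist_le_one (hG m u) (Ne.symm hu) ?_
      have := aux_dist_le_eccent (G := G) m u
      omega
    have hrle3 : graphRadius G ≤ 3 := by
      rcases (by omega : G.dist x0 y0 = 2 ∨ G.dist x0 y0 = 3) with h2' | h3'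
      · obtain ⟨m, hm1, hm2⟩ := aux_common_neighbor h2'
        have hdmx : G.dist m x0 = 1 := by
          rw [SimpleGraph.dist_comm]; exact aux_dist_adj hm1
        have heccm : _root_.eccent G m ≤ 2 := by
          apply aux_eccent_le
          intro u
          by_cases hux : u = x0
          · rw [hux]; omega
          by_cases huy : u = y0
          · rw [huy, aux_dist_adj hm2]; omega
          by_cases hum : u = m
          · rw [hum, SimpleGraph.dist_self]; omega
          rcases hdom0 u hux huy with h | h
          · calc G.dist m u ≤ G.dist m x0 + G.dist x0 u := hG.dist_triangle
            _ ≤ 2 := by rw [hdmx, aux_dist_adj h]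
          · calc G.dist m u ≤ G.dist m y0 + G.dist y0 u := hG.dist_triangle
            _ ≤ 2 := by rw [aux_dist_adj hm2, aux_dist_adj h]
        have := aux_graphRadius_le_eccent (G := G) m
        omega
      · have hge1 : 1 ≤ G.dist x0 y0 := by omega
        obtain ⟨m, hm1, hmd⟩ := aux_exists_adj_dist hge1
        have hdmx : G.dist m x0 = 1 := by
          rw [SimpleGraph.dist_comm]; exact aux_dist_adj hm1
        have heccm : _root_.eccent G m ≤ 3 := by
          apply aux_eccent_le
          intro u
          by_cases hux : u = x0
          · rw [hux]; omega
          by_cases huy : u = y0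
          · rw [huy]; omega
          by_cases hum : u = m
          · rw [hum, SimpleGraph.dist_self]; omega
          rcases hdom0 u hux huy with h | h
          · calc G.dist m u ≤ G.dist m x0 + G.dist x0 u := hG.dist_triangle
            _ ≤ 3 := by rw [hdmx, aux_dist_adj h]; omega
          · calc G.dist m u ≤ G.dist m y0 + G.dist y0 u := hG.dist_triangle
            _ ≤ 3 := by rw [aux_dist_adj h]; omega
        have := aux_graphRadius_le_eccent (G := G) m
        omega
    obtain ⟨x, y, v2, v3, hxy, hnadj, hdom, h2x, h2y, h3x, h3y, h32, hv2, hv3⟩ :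
        ∃ x y v2 v3 : V, x ≠ y ∧ ¬ G.Adj x y ∧
          (∀ u, u ≠ x → u ≠ y → (G.Adj x u ∨ G.Adj y u)) ∧
          v2 ≠ x ∧ v2 ≠ y ∧ v3 ≠ x ∧ v3 ≠ y ∧ v3 ≠ v2 ∧
          (∀ u, u ≠ x → u ≠ y → u ≠ v2 → G.dist v2 u ≤ 2) ∧
          (∀ u, u ≠ x → u ≠ y → u ≠ v2 → u ≠ v3 → G.dist v3 u ≤ 3) := by
      rcases (by omega : graphRadius G = 2 ∨ graphRadius G = 3) with hrad2 | hrad3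
      · by_cases hd4 : graphDiam G = 4
        · obtain ⟨A, hA, hAcard, w, z, hwz, hwA, hzA, heccw, heccz⟩ := hiv ⟨hrad2, hd4⟩
          obtain ⟨xa, ya, hxya, hAeq⟩ := Finset.card_eq_two.mp hAcard
          rw [hAeq] at hwA hzA
          obtain ⟨hnadjA, hdomA⟩ := aux_maxind_pair hxya (hAeq ▸ hA)
          simp only [Finset.mem_insert, Finset.mem_singleton] at hwA hzA
          push_neg at hwA hzA
          refine ⟨xa, ya, w, z, hxya, hnadjA, hdomA, hwA.1, hwA.2, hzA.1, hzA.2,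
            hwz.symm, ?_, ?_⟩
          · intro u _ _ _
            calc G.dist w u ≤ _root_.eccent G w := aux_dist_le_eccent w u
            _ ≤ 2 := le_of_eq heccw
          · intro u _ _ _ _
            calc G.dist z u ≤ _root_.eccent G z := aux_dist_le_eccent z u
            _ ≤ 3 := heccz
        · have hdle3 : ∀ u v : V, G.dist u v ≤ 3 := by
            intro u v
            have h1 := aux_dist_le_graphDiam (G := G) u v
            omega
          rcases (by omega : G.dist x0 y0 = 2 ∨ G.dist x0 y0 = 3) with h2' | h3'
          · obtain ⟨m, hm1, hm2⟩ := aux_common_neighbor h2'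
            have hdmx : G.dist m x0 = 1 := by
              rw [SimpleGraph.dist_comm]; exact aux_dist_adj hm1
            have hmall : ∀ u, G.dist m u ≤ 2 := by
              intro u
              by_cases hux : u = x0
              · rw [hux]; omega
              by_cases huy : u = y0
              · rw [huy, aux_dist_adj hm2]; omega
              by_cases hum : u = m
              · rw [hum, SimpleGraph.dist_self]; omega
              rcases hdom0 u hux huy with h | h
              · calc G.dist m u ≤ G.dist m x0 + G.dist x0 u := hG.dist_triangle
                _ ≤ 2 := by rw [hdmx, aux_dist_adj h]
              · calc G.dist m u ≤ G.dist m y0 + G.dist y0 u := hG.dist_triangle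
                _ ≤ 2 := by rw [aux_dist_adj hm2, aux_dist_adj h]
            have hmx : m ≠ x0 := fun h => G.irrefl (h ▸ hm1)
            have hmy : m ≠ y0 := fun h => G.irrefl (h ▸ hm2)
            have hex : ∃ t : V, t ≠ x0 ∧ t ≠ y0 ∧ t ≠ m := by
              by_contra hcon
              push_neg at hcon
              obtain ⟨u, hu, hnadju⟩ := hnd m
              apply hnadju
              by_cases hux : u = x0
              · rw [hux]; exact hm1.symm
              by_cases huy : u = y0
              · rw [huy]; exact hm2
              · exact absurd (hcon u hux huy) hu
            obtain ⟨t, htx, hty, htm⟩ := hex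
            exact ⟨x0, y0, m, t, hxy0, hnadj0, hdom0, hmx, hmy, htx, hty, htm,
              fun u _ _ _ => hmall u, fun u _ _ _ _ => hdle3 t u⟩
          · obtain ⟨m0, hm0⟩ := aux_exists_central G
            rw [hrad2] at hm0
            have hm0all : ∀ u, G.dist m0 u ≤ 2 := fun u => hm0 ▸ aux_dist_le_eccent (G := G) m0 u
            have hm0x : m0 ≠ x0 := by
              rintro rfl
              have := hm0all y0
              omega
            have hm0y : m0 ≠ y0 := by
              rintro rfl
              have := hm0all x0
              rw [SimpleGraph.dist_comm] at this
              omega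
            obtain ⟨t, ht1, htx, hty⟩ := aux_neighbor_outside hG hnadj0 h3' hm0all
            refine ⟨x0, y0, m0, t, hxy0, hnadj0, hdom0, hm0x, hm0y, htx, hty,
              (G.ne_of_adj ht1).symm, fun u _ _ _ => hm0all u, ?_⟩
            intro u _ _ _ _
            calc G.dist t u ≤ G.dist t m0 + G.dist m0 u := hG.dist_triangle
            _ ≤ 3 := by
                have h1 : G.dist t m0 = 1 := by
                  rw [SimpleGraph.dist_comm]; exact aux_dist_adj ht1
                have := hm0all u
                omega
      · obtain ⟨x, y, hxy', hmax', hdxy3, w, hw1, hw2⟩ := hiii hrad3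
        obtain ⟨hnadj', hdom'⟩ := aux_maxind_pair hxy' hmax'
        have hwx : w ≠ x := (G.ne_of_adj hw1).symm
        have hwy : w ≠ y := by
          rintro rfl
          exact hnadj' hw1
        have hdwx : G.dist w x = 1 := by
          rw [SimpleGraph.dist_comm]; exact aux_dist_adj hw1
        have hv2p : ∀ u, u ≠ x → u ≠ y → u ≠ w → G.dist w u ≤ 2 := by
          intro u hux huy huw
          rcases hdom' u hux huy with h | h
          · calc G.dist w u ≤ G.dist w x + G.dist x u := hG.dist_triangle
            _ ≤ 2 := by rw [hdwx, aux_dist_adj h]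
          · exact hw2 u h
        have hnwy : ¬ G.Adj w y := by
          intro h
          have : G.dist x y ≤ 2 := by
            calc G.dist x y ≤ G.dist x w + G.dist w y := hG.dist_triangle
            _ ≤ 2 := by rw [aux_dist_adj hw1, aux_dist_adj h]
          omega
        have hex : ∃ t, G.Adj w t ∧ t ≠ x ∧ t ≠ y := by
          by_contra hcon
          push_neg at hcon
          have hNw : ∀ t, G.Adj w t → t = x := by
            intro t htadj
            by_cases htx : t = x
            · exact htx
            · exact absurd (hcon t htadj htx ▸ htadj) hnwy
          have hdyx : 1 ≤ G.dist y x := by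
            rw [SimpleGraph.dist_comm]
            omega
          obtain ⟨z0, hz0, -⟩ := aux_exists_adj_dist hdyx
          have hdwz0 : G.dist w z0 ≤ 2 := hw2 z0 hz0
          have hz0w : z0 ≠ w := by
            rintro rfl
            exact hnwy hz0.symm
          have hz0x : z0 ≠ x := by
            rintro rfl
            exact hnadj' hz0.symm
          have hpos : 1 ≤ G.dist w z0 := (hG w z0).pos_dist_of_ne (Ne.symm hz0w)
          rcases (by omega : G.dist w z0 = 1 ∨ G.dist w z0 = 2) with h1 | h2
          · have hadj := aux_adj_of_dist_le_one (hG w z0) (Ne.symm hz0w) (by omega)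
            exact hz0x (hNw z0 hadj)
          · obtain ⟨s, hs1, hs2⟩ := aux_common_neighbor h2
            have hsx : s = x := hNw s hs1
            rw [hsx] at hs2
            have : G.dist x y ≤ 2 := by
              calc G.dist x y ≤ G.dist x z0 + G.dist z0 y := hG.dist_triangle
              _ ≤ 2 := by
                  rw [aux_dist_adj hs2, SimpleGraph.dist_comm (G := G) (u := z0) (v := y),
                    aux_dist_adj hz0]
            omega
        obtain ⟨t, ht1, htx, hty⟩ := hex
        have htw : t ≠ w := (G.ne_of_adj ht1).symm
        refine ⟨x, y, w, t, hxy', hnadj', hdom', hwx, hwy, htx, hty, htw, hv2p, ?_⟩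
        intro u hux huy huw hut
        calc G.dist t u ≤ G.dist t w + G.dist w u := hG.dist_triangle
        _ ≤ 3 := by
            have h1 : G.dist t w = 1 := by
              rw [SimpleGraph.dist_comm]; exact aux_dist_adj ht1
            have h2 := hv2p u hux huy huw
            omega
    obtain ⟨c, hc⟩ := aux_construct hG hxy hnadj hdom h2x h2y h3x h3y h32 hv2 hv3 hdiam'
    have hmemS : (n - 1) ∈ S := ⟨c, hc⟩
    have hub : ∀ k ∈ S, k ≤ n - 1 := by
      rintro k ⟨c', hc'⟩
      have hk := aux_greedy_le_card hc'
      rcases Nat.eq_or_lt_of_le hk with he | hl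
      · exfalso
        rw [he] at hc'
        obtain ⟨x1, hx1⟩ := aux_greedy_card_dom hG hc'
        obtain ⟨u, hu, hnadju⟩ := hnd x1
        exact hnadju (hx1 u hu)
      · omega
    exact le_antisymm (csSup_le ⟨_, hmemS⟩ hub) (le_csSup hbdd hmemS)
end

section
/- For all finite nonempty graphs G and H, Γρ(G ∨ H) = |V(G)| + |V(H)| − min{i(G), i(H)} + 1, where G ∨ H is the join of G and H. -/
open SimpleGraph

section Aux

open Sum

variable {V W : Type*}

/-- Auxiliary: trivial independent set. -/
lemma aux_indep_empty (G : SimpleGraph V) : IsIndepFinset G ∅ := by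
  intro u hu; simp at hu

/-- Every finite graph has a maximal independent finset. -/
lemma aux_exists_maxIndepFinset [Fintype V] (G : SimpleGraph V) :
    ∃ s : Finset V, IsMaxIndepFinset G s := by
  classical
  have hne : (Finset.univ.filter (fun s : Finset V => IsIndepFinset G s)).Nonempty :=
    ⟨∅, by simp [aux_indep_empty]⟩
  obtain ⟨s, hs, hmax⟩ := Finset.exists_max_image _ Finset.card hne
  simp only [Finset.mem_filter, Finset.mem_univ, true_and] at hs hmax
  refine ⟨s, hs, fun t ht hst => ?_⟩
  exact Finset.eq_of_subset_of_card_le hst (hmax t ht)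

lemma aux_maxIndep_nonempty [Nonempty V] {G : SimpleGraph V} {s : Finset V}
    (hs : IsMaxIndepFinset G s) : s.Nonempty := by
  classical
  rcases s.eq_empty_or_nonempty with h | h
  · exfalso
    obtain ⟨v⟩ := ‹Nonempty V›
    have hv : IsIndepFinset G {v} := by
      intro a ha b hb
      simp only [Finset.mem_singleton] at ha hb
      subst ha; subst hb; exact G.irrefl
    have := hs.2 {v} hv (by simp [h])
    rw [h] at this
    exact (Finset.singleton_ne_empty v) this.symm
  · exact h

lemma aux_maxIndep_dominates {G : SimpleGraph V} {s : Finset V}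
    (hs : IsMaxIndepFinset G s) {v : V} (hv : v ∉ s) : ∃ u ∈ s, G.Adj u v := by
  classical
  by_contra hcon
  push_neg at hcon
  have hins : IsIndepFinset G (insert v s) := by
    intro a ha b hb
    rcases Finset.mem_insert.mp ha with rfl | ha' <;>
      rcases Finset.mem_insert.mp hb with rfl | hb'
    · exact G.irrefl
    · intro hadj; exact hcon b hb' (G.adj_symm hadj)
    · exact hcon a ha'
    · exact hs.1 a ha' b hb' 
  have := hs.2 _ hins (Finset.subset_insert v s)
  exact hv (this ▸ Finset.mem_insert_self v s)

variable (G : SimpleGraph V) (H : SimpleGraph W)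

lemma aux_join_adj_inl_inl (a b : V) :
    (joinGraph G H).Adj (inl a) (inl b) ↔ G.Adj a b := Iff.rfl

lemma aux_join_adj_inr_inr (a b : W) :
    (joinGraph G H).Adj (inr a) (inr b) ↔ H.Adj a b := Iff.rfl

lemma aux_join_adj_inl_inr (a : V) (b : W) :
    (joinGraph G H).Adj (inl a) (inr b) := trivial

lemma aux_join_adj_inr_inl (a : W) (b : V) :
    (joinGraph G H).Adj (inr a) (inl b) := trivial

variable [Nonempty V] [Nonempty W]

lemma aux_join_exists_walk (u v : V ⊕ W) :
    ∃ p : (joinGraph G H).Walk u v, p.length ≤ 2 := by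
  have a0 : V := Classical.arbitrary V
  have b0 : W := Classical.arbitrary W
  match u, v with
  | inl a, inl b =>
      exact ⟨SimpleGraph.Walk.cons (aux_join_adj_inl_inr G H a b0)
        (SimpleGraph.Walk.cons (aux_join_adj_inr_inl G H b0 b) SimpleGraph.Walk.nil), by simp⟩
  | inr a, inr b =>
      exact ⟨SimpleGraph.Walk.cons (aux_join_adj_inr_inl G H a a0)
        (SimpleGraph.Walk.cons (aux_join_adj_inl_inr G H a0 b) SimpleGraph.Walk.nil), by simp⟩
  | inl a, inr b =>
      exact ⟨SimpleGraph.Walk.cons (aux_join_adj_inl_inr G H a b) SimpleGraph.Walk.nil, by simp⟩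
  | inr a, inl b =>
      exact ⟨SimpleGraph.Walk.cons (aux_join_adj_inr_inl G H a b) SimpleGraph.Walk.nil, by simp⟩

lemma aux_join_reachable (u v : V ⊕ W) : (joinGraph G H).Reachable u v :=
  (aux_join_exists_walk G H u v).choose.reachable

lemma aux_join_dist_le_two (u v : V ⊕ W) : (joinGraph G H).dist u v ≤ 2 := by
  obtain ⟨p, hp⟩ := aux_join_exists_walk G H u v
  exact (SimpleGraph.dist_le p).trans hp

lemma aux_join_two_le_dist {u v : V ⊕ W} (hne : u ≠ v)
    (hna : ¬ (joinGraph G H).Adj u v) : 2 ≤ (joinGraph G H).dist u v := by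
  have h1 : 0 < (joinGraph G H).dist u v :=
    (aux_join_reachable G H u v).pos_dist_of_ne hne
  have h2 : (joinGraph G H).dist u v ≠ 1 := by
    intro h; exact hna (SimpleGraph.dist_eq_one_iff_adj.mp h)
  omega

/-- A maximal independent finset of `G` gives one of the join, via `inl`. -/
lemma aux_image_inl_maxIndep {s : Finset V} (hs : IsMaxIndepFinset G s) :
    ∃ S : Finset (V ⊕ W), IsMaxIndepFinset (joinGraph G H) S ∧ S.card = s.card := by
  classical
  refine ⟨s.image inl, ⟨?_, ?_⟩, Finset.card_image_of_injective s inl_injective⟩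
  · rintro u hu v hv
    obtain ⟨a, ha, rfl⟩ := Finset.mem_image.mp hu
    obtain ⟨b, hb, rfl⟩ := Finset.mem_image.mp hv
    exact hs.1 a ha b hb
  · intro t ht hsub
    refine Finset.Subset.antisymm hsub fun x hx => ?_
    obtain ⟨a₀, ha₀⟩ := aux_maxIndep_nonempty hs
    match x with
    | inr b =>
        exact absurd (aux_join_adj_inl_inr G H a₀ b)
          (ht _ (hsub (Finset.mem_image_of_mem inl ha₀)) _ hx)
    | inl a =>
        have hains : IsIndepFinset G (insert a s) := by
          intro u hu v hv
          have hu' : (inl u : V ⊕ W) ∈ t := by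
            rcases Finset.mem_insert.mp hu with h | h
            · subst h; exact hx
            · exact hsub (Finset.mem_image_of_mem inl h)
          have hv' : (inl v : V ⊕ W) ∈ t := by
            rcases Finset.mem_insert.mp hv with h | h
            · subst h; exact hx
            · exact hsub (Finset.mem_image_of_mem inl h)
          exact ht _ hu' _ hv'
        have : s = insert a s := hs.2 _ hains (Finset.subset_insert a s)
        exact Finset.mem_image_of_mem inl (this ▸ Finset.mem_insert_self a s)

lemma aux_image_inr_maxIndep {s : Finset W} (hs : IsMaxIndepFinset H s) :
    ∃ S : Finset (V ⊕ W), IsMaxIndepFinset (joinGraph G H) S ∧ S.card = s.card := by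
  classical
  refine ⟨s.image inr, ⟨?_, ?_⟩, Finset.card_image_of_injective s inr_injective⟩
  · rintro u hu v hv
    obtain ⟨a, ha, rfl⟩ := Finset.mem_image.mp hu
    obtain ⟨b, hb, rfl⟩ := Finset.mem_image.mp hv
    exact hs.1 a ha b hb
  · intro t ht hsub
    refine Finset.Subset.antisymm hsub fun x hx => ?_
    obtain ⟨a₀, ha₀⟩ := aux_maxIndep_nonempty hs
    match x with
    | inl b =>
        exact absurd (aux_join_adj_inr_inl G H a₀ b)
          (ht _ (hsub (Finset.mem_image_of_mem inr ha₀)) _ hx)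
    | inr a =>
        have hains : IsIndepFinset H (insert a s) := by
          intro u hu v hv
          have hu' : (inr u : V ⊕ W) ∈ t := by
            rcases Finset.mem_insert.mp hu with h | h
            · subst h; exact hx
            · exact hsub (Finset.mem_image_of_mem inr h)
          have hv' : (inr v : V ⊕ W) ∈ t := by
            rcases Finset.mem_insert.mp hv with h | h
            · subst h; exact hx
            · exact hsub (Finset.mem_image_of_mem inr h)
          exact ht _ hu' _ hv'
        have : s = insert a s := hs.2 _ hains (Finset.subset_insert a s)
        exact Finset.mem_image_of_mem inr (this ▸ Finset.mem_insert_self a s)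

variable [Fintype V] [Fintype W]

/-- Projection: any maximal independent finset of the join has card at least the min. -/
lemma aux_maxIndep_join_card_ge {S : Finset (V ⊕ W)}
    (hS : IsMaxIndepFinset (joinGraph G H) S) :
    min (indepDomNum G) (indepDomNum H) ≤ S.card := by
  classical
  have hSne : S.Nonempty := aux_maxIndep_nonempty hS
  by_cases hl : ∃ a : V, inl a ∈ S
  · -- all elements of S are inl
    obtain ⟨a₀, ha₀⟩ := hl
    have hall : ∀ x ∈ S, ∃ a : V, x = inl a := by
      intro x hx
      match x with
      | inl a => exact ⟨a, rfl⟩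
      | inr b => exact absurd (aux_join_adj_inl_inr G H a₀ b) (hS.1 _ ha₀ _ hx)
    set s : Finset V := S.preimage inl (Set.injOn_of_injective inl_injective) with hsdef
    have hmem : ∀ a : V, a ∈ s ↔ (inl a : V ⊕ W) ∈ S := by
      intro a; simp [hsdef, Finset.mem_preimage]
    have himg : s.image inl = S := by
      apply Finset.Subset.antisymm
      · intro x hx
        obtain ⟨a, ha, rfl⟩ := Finset.mem_image.mp hx
        exact (hmem a).mp ha
      · intro x hx
        obtain ⟨a, rfl⟩ := hall x hx
        exact Finset.mem_image_of_mem inl ((hmem a).mpr hx)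
    have hcard : s.card = S.card := by
      rw [← himg]; exact (Finset.card_image_of_injective s inl_injective).symm
    have hsmax : IsMaxIndepFinset G s := by
      constructor
      · intro u hu v hv
        exact hS.1 _ ((hmem u).mp hu) _ ((hmem v).mp hv)
      · intro t ht hst
        have : S = t.image inl := by
          refine hS.2 _ ?_ ?_
          · rintro u hu v hv
            obtain ⟨a, ha, rfl⟩ := Finset.mem_image.mp hu
            obtain ⟨b, hb, rfl⟩ := Finset.mem_image.mp hv
            exact ht a ha b hb
          · rw [← himg]
            exact Finset.image_subset_image hst
        refine Finset.Subset.antisymm hst fun a ha => ?_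
        have : (inl a : V ⊕ W) ∈ S := this ▸ Finset.mem_image_of_mem inl ha
        exact (hmem a).mpr this
    calc min (indepDomNum G) (indepDomNum H) ≤ indepDomNum G := min_le_left _ _
      _ ≤ s.card := Nat.sInf_le ⟨s, hsmax, rfl⟩
      _ = S.card := hcard
  · -- all elements of S are inr
    push_neg at hl
    have hall : ∀ x ∈ S, ∃ b : W, x = inr b := by
      intro x hx
      match x with
      | inl a => exact absurd hx (hl a)
      | inr b => exact ⟨b, rfl⟩
    set s : Finset W := S.preimage inr (Set.injOn_of_injective inr_injective) with hsdef
    have hmem : ∀ a : W, a ∈ s ↔ (inr a : V ⊕ W) ∈ S := by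
      intro a; simp [hsdef, Finset.mem_preimage]
    have himg : s.image inr = S := by
      apply Finset.Subset.antisymm
      · intro x hx
        obtain ⟨a, ha, rfl⟩ := Finset.mem_image.mp hx
        exact (hmem a).mp ha
      · intro x hx
        obtain ⟨a, rfl⟩ := hall x hx
        exact Finset.mem_image_of_mem inr ((hmem a).mpr hx)
    have hcard : s.card = S.card := by
      rw [← himg]; exact (Finset.card_image_of_injective s inr_injective).symm
    have hsmax : IsMaxIndepFinset H s := by
      constructor
      · intro u hu v hv
        exact hS.1 _ ((hmem u).mp hu) _ ((hmem v).mp hv)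
      · intro t ht hst
        have : S = t.image inr := by
          refine hS.2 _ ?_ ?_
          · rintro u hu v hv
            obtain ⟨a, ha, rfl⟩ := Finset.mem_image.mp hu
            obtain ⟨b, hb, rfl⟩ := Finset.mem_image.mp hv
            exact ht a ha b hb
          · rw [← himg]
            exact Finset.image_subset_image hst
        refine Finset.Subset.antisymm hst fun a ha => ?_
        have : (inr a : V ⊕ W) ∈ S := this ▸ Finset.mem_image_of_mem inr ha
        exact (hmem a).mpr this
    calc min (indepDomNum G) (indepDomNum H) ≤ indepDomNum H := min_le_right _ _
      _ ≤ s.card := Nat.sInf_le ⟨s, hsmax, rfl⟩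
      _ = S.card := hcard

/-- Lower bound: a maximal independent finset of the join yields a greedy packing coloring. -/
lemma aux_join_coloring {S : Finset (V ⊕ W)}
    (hS : IsMaxIndepFinset (joinGraph G H) S) :
    ∃ c : V ⊕ W → ℕ,
      IsGreedyPackingColoring (joinGraph G H) (Fintype.card (V ⊕ W) - S.card + 1) c := by
  classical
  set T : Finset (V ⊕ W) := Finset.univ \ S with hTdef
  have hmemT : ∀ v, v ∈ T ↔ v ∉ S := by intro v; simp [hTdef]
  have hTcard : T.card = Fintype.card (V ⊕ W) - S.card := by
    rw [hTdef, Finset.card_sdiff_of_subset (Finset.subset_univ S), Finset.card_univ]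
  have hTne : T.Nonempty := by
    have a0 : V := Classical.arbitrary V
    have b0 : W := Classical.arbitrary W
    by_cases h : (inl a0 : V ⊕ W) ∈ S
    · by_cases h' : (inr b0 : V ⊕ W) ∈ S
      · exact absurd (aux_join_adj_inl_inr G H a0 b0) (hS.1 _ h _ h')
      · exact ⟨inr b0, (hmemT _).mpr h'⟩
    · exact ⟨inl a0, (hmemT _).mpr h⟩
  have hT1 : 1 ≤ T.card := hTne.card_pos
  set e : {x // x ∈ T} ≃ Fin T.card := Fintype.equivFinOfCardEq (Fintype.card_coe T) with hedef
  set c : V ⊕ W → ℕ := fun v => if h : v ∈ T then ((e ⟨v, h⟩ : Fin T.card) : ℕ) + 2 else 1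
    with hcdef
  have hc1 : ∀ v ∉ T, c v = 1 := by intro v hv; simp [hcdef, dif_neg hv]
  have hc2 : ∀ v (h : v ∈ T), c v = ((e ⟨v, h⟩ : Fin T.card) : ℕ) + 2 := by
    intro v hv; simp [hcdef, dif_pos hv]
  have hk : Fintype.card (V ⊕ W) - S.card + 1 = T.card + 1 := by omega
  rw [hk]
  refine ⟨c, ⟨?_, ?_⟩, ?_, ?_⟩
  · -- bounds
    intro v
    by_cases h : v ∈ T
    · have := (e ⟨v, h⟩).isLt
      rw [hc2 v h]
      omega
    · rw [hc1 v h]; omega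
  · -- packing
    intro u v hne heq _
    by_cases hu : u ∈ T <;> by_cases hv : v ∈ T
    · exfalso
      rw [hc2 u hu, hc2 v hv] at heq
      have : e ⟨u, hu⟩ = e ⟨v, hv⟩ := Fin.ext (by omega)
      have := congrArg Subtype.val (e.injective this)
      exact hne this
    · exfalso; rw [hc2 u hu, hc1 v hv] at heq; omega
    · exfalso; rw [hc1 u hu, hc2 v hv] at heq; omega
    · have hus : u ∈ S := by by_contra h; exact hu ((hmemT u).mpr h)
      have hvs : v ∈ S := by by_contra h; exact hv ((hmemT v).mpr h)
      have hna : ¬ (joinGraph G H).Adj u v := hS.1 u hus v hvs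
      have := aux_join_two_le_dist G H hne hna
      rw [hc1 u hu]
      omega
  · -- uses color k
    refine ⟨(e.symm ⟨T.card - 1, by omega⟩).1, ?_⟩
    have hmem := (e.symm ⟨T.card - 1, by omega⟩).2
    rw [hc2 _ hmem]
    have : e ⟨(e.symm ⟨T.card - 1, by omega⟩).1, hmem⟩ = ⟨T.card - 1, by omega⟩ := by
      rw [show (⟨(e.symm ⟨T.card - 1, by omega⟩).1, hmem⟩ : {x // x ∈ T}) =
        e.symm ⟨T.card - 1, by omega⟩ from rfl, Equiv.apply_symm_apply]
    rw [this]
    simp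
    omega
  · -- greedy
    intro v j hj1 hjlt
    have hvT : v ∈ T := by
      by_contra h
      rw [hc1 v h] at hjlt
      omega
    by_cases hj : j = 1
    · subst hj
      have hvS : v ∉ S := (hmemT v).mp hvT
      obtain ⟨u, hu, hadj⟩ := aux_maxIndep_dominates hS hvS
      refine ⟨u, hc1 u (by rw [hmemT]; simp [hu]), hadj.reachable, ?_⟩
      rw [SimpleGraph.dist_eq_one_iff_adj.mpr hadj]
    · have hcv : c v = ((e ⟨v, hvT⟩ : Fin T.card) : ℕ) + 2 := hc2 v hvT
      have hlt := (e ⟨v, hvT⟩).isLt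
      have hjk : j - 2 < T.card := by omega
      set u := e.symm ⟨j - 2, hjk⟩ with hudef
      have hcu : c u.1 = j := by
        rw [hc2 u.1 u.2]
        have : e ⟨u.1, u.2⟩ = ⟨j - 2, hjk⟩ := by
          rw [show (⟨u.1, u.2⟩ : {x // x ∈ T}) = u from rfl, hudef, Equiv.apply_symm_apply]
        rw [this]
        simp
        omega
      exact ⟨u.1, hcu, aux_join_reachable G H u.1 v,
        le_trans (aux_join_dist_le_two G H u.1 v) (by omega)⟩

/-- Upper bound for greedy packing colorings of the join. -/
lemma aux_join_upper {k : ℕ} {c : V ⊕ W → ℕ}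
    (hc : IsGreedyPackingColoring (joinGraph G H) k c) :
    k ≤ Fintype.card (V ⊕ W) - min (indepDomNum G) (indepDomNum H) + 1 := by
  classical
  obtain ⟨⟨hbd, hpack⟩, ⟨v₀, hv₀⟩, hgreedy⟩ := hc
  set S : Finset (V ⊕ W) := Finset.univ.filter (fun v => c v = 1) with hSdef
  have hmemS : ∀ v, v ∈ S ↔ c v = 1 := by intro v; simp [hSdef]
  have hk1 : 1 ≤ k := le_trans (hbd v₀).1 (le_of_eq hv₀)
  have hk2 : 2 ≤ k := by
    by_contra h
    have hkk : k = 1 := by omega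
    have a0 : V := Classical.arbitrary V
    have b0 : W := Classical.arbitrary W
    have hne : (inl a0 : V ⊕ W) ≠ inr b0 := by simp
    have hadj := aux_join_adj_inl_inr G H a0 b0
    have heq : c (inl a0 : V ⊕ W) = c (inr b0) := by
      have h1 := hbd (inl a0 : V ⊕ W); have h2 := hbd (inr b0 : V ⊕ W); omega
    have := hpack _ _ hne heq hadj.reachable
    rw [SimpleGraph.dist_eq_one_iff_adj.mpr hadj] at this
    have := hbd (inl a0 : V ⊕ W)
    omega
  have hSmax : IsMaxIndepFinset (joinGraph G H) S := by
    constructor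
    · intro u hu v hv hadj
      have h := hpack u v hadj.ne (by rw [(hmemS u).mp hu, (hmemS v).mp hv]) hadj.reachable
      rw [SimpleGraph.dist_eq_one_iff_adj.mpr hadj, (hmemS u).mp hu] at h
      omega
    · intro t ht hsub
      refine Finset.Subset.antisymm hsub fun x hx => ?_
      by_contra hxS
      have hx1 : c x ≠ 1 := fun h => hxS ((hmemS x).mpr h)
      have hx2 : 2 ≤ c x := by have := hbd x; omega
      obtain ⟨u, hu1, hur, hud⟩ := hgreedy x 1 le_rfl (by omega)
      have hune : u ≠ x := fun h => hx1 (h ▸ hu1)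
      have hpos := hur.pos_dist_of_ne hune
      have hadj : (joinGraph G H).Adj u x :=
        SimpleGraph.dist_eq_one_iff_adj.mp (by omega)
      exact ht u (hsub ((hmemS u).mpr hu1)) x hx hadj
  have hmin : min (indepDomNum G) (indepDomNum H) ≤ S.card :=
    aux_maxIndep_join_card_ge G H hSmax
  set T : Finset (V ⊕ W) := Finset.univ \ S with hTdef
  have hsurj : Set.SurjOn c ↑T ↑(Finset.Icc 2 k) := by
    intro j hj
    simp only [Finset.coe_Icc, Set.mem_Icc] at hj
    have hjex : ∃ u, c u = j := by
      by_cases hjk : j = k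
      · exact ⟨v₀, hjk ▸ hv₀⟩
      · obtain ⟨u, hu, _, _⟩ := hgreedy v₀ j (by omega) (by omega)
        exact ⟨u, hu⟩
    obtain ⟨u, hu⟩ := hjex
    refine ⟨u, ?_, hu⟩
    simp only [hTdef, Finset.coe_sdiff, Finset.coe_univ, Set.mem_diff, Set.mem_univ, true_and,
      Finset.mem_coe]
    rw [hmemS]
    omega
  have hcount : (Finset.Icc 2 k).card ≤ T.card := Finset.card_le_card_of_surjOn c hsurj
  rw [Nat.card_Icc] at hcount
  have hT : T.card = Fintype.card (V ⊕ W) - S.card := by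
    rw [hTdef, Finset.card_sdiff_of_subset (Finset.subset_univ S), Finset.card_univ]
  have hSn : S.card ≤ Fintype.card (V ⊕ W) := by
    rw [← Finset.card_univ]; exact Finset.card_le_univ S
  omega

end Aux


/-- For all finite nonempty graphs `G` and `H`,
`Γρ(G ∨ H) = |V(G)| + |V(H)| - min{i(G), i(H)} + 1`. -/
theorem grundyPackingChromaticNumber_join {V W : Type*} [Fintype V] [Fintype W]
    [Nonempty V] [Nonempty W] (G : SimpleGraph V) (H : SimpleGraph W) :
    grundyPackingChromaticNumber (joinGraph G H) =
      Fintype.card V + Fintype.card W - min (indepDomNum G) (indepDomNum H) + 1 := by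
  classical
  have hcards : Fintype.card (V ⊕ W) = Fintype.card V + Fintype.card W := Fintype.card_sum
  set m := Fintype.card V + Fintype.card W - min (indepDomNum G) (indepDomNum H) + 1 with hmdef
  have hmem : m ∈ {k | ∃ c : V ⊕ W → ℕ, IsGreedyPackingColoring (joinGraph G H) k c} := by
    rcases le_total (indepDomNum G) (indepDomNum H) with hle | hle
    · obtain ⟨s0, hs0⟩ := aux_exists_maxIndepFinset G
      have hne : {n | ∃ s : Finset V, IsMaxIndepFinset G s ∧ s.card = n}.Nonempty :=
        ⟨s0.card, s0, hs0, rfl⟩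
      obtain ⟨s, hsmax, hscard⟩ := Nat.sInf_mem hne
      obtain ⟨S, hSmax, hScard⟩ := aux_image_inl_maxIndep G H hsmax
      obtain ⟨c, hc⟩ := aux_join_coloring G H hSmax
      refine ⟨c, ?_⟩
      have : Fintype.card (V ⊕ W) - S.card + 1 = m := by
        rw [hScard, hscard, hcards, hmdef, min_eq_left hle]; rfl
      rwa [this] at hc
    · obtain ⟨s0, hs0⟩ := aux_exists_maxIndepFinset H
      have hne : {n | ∃ s : Finset W, IsMaxIndepFinset H s ∧ s.card = n}.Nonempty :=
        ⟨s0.card, s0, hs0, rfl⟩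
      obtain ⟨s, hsmax, hscard⟩ := Nat.sInf_mem hne
      obtain ⟨S, hSmax, hScard⟩ := aux_image_inr_maxIndep G H hsmax
      obtain ⟨c, hc⟩ := aux_join_coloring G H hSmax
      refine ⟨c, ?_⟩
      have : Fintype.card (V ⊕ W) - S.card + 1 = m := by
        rw [hScard, hscard, hcards, hmdef, min_eq_right hle]; rfl
      rwa [this] at hc
  have hub : ∀ k ∈ {k | ∃ c : V ⊕ W → ℕ, IsGreedyPackingColoring (joinGraph G H) k c},
      k ≤ m := by
    rintro k ⟨c, hc⟩
    have := aux_join_upper G H hc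
    rw [hcards] at this
    exact this
  exact le_antisymm (csSup_le ⟨m, hmem⟩ hub) (le_csSup ⟨m, hub⟩ hmem)
end
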